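/- arXiv:0902.0026 — 2 statements merged into one kernel-verified Lean document; each statement's English description precedes it below -/
import Mathlib

section
/- Suppose W ≥ 2 and 2 ≤ p ≤ 4·log W. Then the p-th moment of the maximum entry of the random demodulator matrix satisfies (E[ (max_{r,ω} |Φ_{r,ω}|)^p ])^{1/p} ≤ √(6·log W / R). -/
open MeasureTheory ProbabilityTheory Matrix
open scoped BigOperators ENNReal

noncomputable section

/-- The `W×W` unitary discrete Fourier transform matrix,
`F_{n,ω} = W^{-1/2}·exp(-2πi·n·ω/W)`. -/
def dftMatrix (W : ℕ) : Matrix (Fin W) (Fin W) ℂ := fun n w =>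
  (Real.sqrt W : ℂ)⁻¹ *
    Complex.exp (-2 * Real.pi * Complex.I * (n.val : ℂ) * (w.val : ℂ) / (W : ℂ))

/-- The `R×W` accumulate-and-dump sampling matrix `H`:
`H_{r,j} = 1` iff `r·(W/R) ≤ j < (r+1)·(W/R)`. -/
def sampMatrix (W R : ℕ) : Matrix (Fin R) (Fin W) ℂ := fun r j =>
  if r.val * (W / R) ≤ j.val ∧ j.val < (r.val + 1) * (W / R) then 1 else 0

/-- The random demodulator matrix `Φ = H·D·F` for the sign sequence `ε`. -/
def demodMatrix (W R : ℕ) (ε : Fin W → ℝ) : Matrix (Fin R) (Fin W) ℂ :=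
  sampMatrix W R * Matrix.diagonal (fun j => (ε j : ℂ)) * dftMatrix W

/-- Spectral (`ℓ2 → ℓ2` operator) norm of a complex matrix. -/
def specNorm {m n : Type} [Fintype m] [Fintype n] [DecidableEq n]
    (A : Matrix m n ℂ) : ℝ :=
  ‖LinearMap.toContinuousLinearMap (Matrix.toEuclideanLin A)‖

/-- Frobenius norm of a complex matrix. -/
def frobNorm {m n : Type} [Fintype m] [Fintype n] (A : Matrix m n ℂ) : ℝ :=
  Real.sqrt (∑ i, ∑ j, ‖A i j‖ ^ 2)

/-- ℓ1 norm of a complex vector. -/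
def l1norm {n : Type} [Fintype n] (v : n → ℂ) : ℝ := ∑ i, ‖v i‖

/-- ℓ2 norm of a complex vector. -/
def l2norm {n : Type} [Fintype n] (v : n → ℂ) : ℝ :=
  Real.sqrt (∑ i, ‖v i‖ ^ 2)

/-- `ε` is a family of `W` independent Rademacher random variables on `(Ωp, μ)`:
each coordinate is measurable, takes only the values `±1`, takes each value with
probability `1/2`, and the coordinates are jointly independent. -/
def IsRademacherFamily {Ωp : Type} [MeasurableSpace Ωp] (μ : Measure Ωp) {W : ℕ}
    (ε : Ωp → Fin W → ℝ) : Prop :=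
  (∀ j, Measurable (fun x => ε x j)) ∧
  (∀ x j, ε x j = 1 ∨ ε x j = -1) ∧
  (∀ j, μ {x | ε x j = 1} = 1 / 2) ∧
  iIndepFun (fun j x => ε x j) μ

section Aux

/-- double factorial `(2k-1)!! = ∏_{i<k} (2i+1)` -/
def dfac (k : ℕ) : ℕ := ∏ i ∈ Finset.range k, (2 * i + 1)

lemma dfac_pos (k : ℕ) : 0 < dfac k := Finset.prod_pos (fun i _ => Nat.succ_pos _)

lemma dfac_succ (k : ℕ) : dfac (k + 1) = dfac k * (2 * k + 1) := Finset.prod_range_succ _ _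

lemma dfac_mul_eq (k : ℕ) : dfac k * (2 ^ k * k.factorial) = (2 * k).factorial := by
  induction k with
  | zero => simp [dfac]
  | succ n ih =>
    rw [dfac_succ, Nat.factorial_succ, pow_succ]
    have h2 : 2 * (n + 1) = (2 * n + 1) + 1 := by ring
    rw [h2, Nat.factorial_succ, Nat.factorial_succ]
    calc dfac n * (2 * n + 1) * (2 ^ n * 2 * ((n + 1) * n.factorial))
        = ((2 * n + 1) + 1) * ((2 * n + 1) * (dfac n * (2 ^ n * n.factorial))) := by ring
      _ = (2 * n + 1 + 1) * ((2 * n + 1) * (2 * n).factorial) := by rw [ih]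

lemma two_pow_mul_factorial_le (m : ℕ) : 2 ^ m * m.factorial ≤ (2 * m).factorial := by
  calc 2 ^ m * m.factorial ≤ dfac m * (2 ^ m * m.factorial) :=
        Nat.le_mul_of_pos_left _ (dfac_pos m)
    _ = (2 * m).factorial := dfac_mul_eq m

/-- key coefficient inequality: `C(2k,2j) * dfac j ≤ dfac k * C(k,j)` for `j ≤ k`. -/
lemma choose_dfac_le {j k : ℕ} (hjk : j ≤ k) :
    (2 * k).choose (2 * j) * dfac j ≤ dfac k * k.choose j := by
  have h2jk : 2 * j ≤ 2 * k := by omega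
  -- identity: C(2k,2j) * dfac j * (2k-2j)! = dfac k * C(k,j) * 2^(k-j) * (k-j)!
  have key : (2 * k).choose (2 * j) * dfac j * (2 * k - 2 * j).factorial
      = dfac k * k.choose j * (2 ^ (k - j) * (k - j).factorial) := by
    have hpos : 0 < 2 ^ j * j.factorial := Nat.mul_pos (Nat.pow_pos (by norm_num)) j.factorial_pos
    apply Nat.eq_of_mul_eq_mul_right hpos
    have e1 : (2 * k).choose (2 * j) * dfac j * (2 * k - 2 * j).factorial * (2 ^ j * j.factorial)
        = (2 * k).choose (2 * j) * (dfac j * (2 ^ j * j.factorial)) * (2 * k - 2 * j).factorial := by ring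
    rw [e1, dfac_mul_eq]
    have e2 : (2 * k).choose (2 * j) * (2 * j).factorial * (2 * k - 2 * j).factorial
        = (2 * k).factorial := Nat.choose_mul_factorial_mul_factorial h2jk
    have e3 : dfac k * k.choose j * (2 ^ (k - j) * (k - j).factorial) * (2 ^ j * j.factorial)
        = dfac k * (2 ^ (k - j) * 2 ^ j) * (k.choose j * (k - j).factorial * j.factorial) := by ring
    rw [e2, e3, ← pow_add]
    have : k - j + j = k := by omega
    rw [this]
    have e4 : k.choose j * (k - j).factorial * j.factorial = k.factorial := by
      have := Nat.choose_mul_factorial_mul_factorial hjk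
      linarith [this]
    rw [e4]
    have := dfac_mul_eq k
    linarith [this]
  -- now use 2^(k-j)*(k-j)! ≤ (2(k-j))! = (2k-2j)!
  have hle : 2 ^ (k - j) * (k - j).factorial ≤ (2 * k - 2 * j).factorial := by
    have : 2 * k - 2 * j = 2 * (k - j) := by omega
    rw [this]; exact two_pow_mul_factorial_le _
  have hfpos : 0 < 2 ^ (k - j) * (k - j).factorial :=
    Nat.mul_pos (Nat.pow_pos (by norm_num)) (k - j).factorial_pos
  by_contra hcon
  push_neg at hcon
  have h1 : dfac k * k.choose j * (2 ^ (k - j) * (k - j).factorial)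
      < (2 * k).choose (2 * j) * dfac j * (2 ^ (k - j) * (k - j).factorial) :=
    (Nat.mul_lt_mul_right hfpos).mpr hcon
  have h2 : (2 * k).choose (2 * j) * dfac j * (2 ^ (k - j) * (k - j).factorial)
      ≤ (2 * k).choose (2 * j) * dfac j * (2 * k - 2 * j).factorial :=
    Nat.mul_le_mul_left _ hle
  omega


lemma one_le_log_three : 1 ≤ Real.log 3 := by
  have h1 : Real.exp 1 ≤ 3 := le_of_lt (lt_trans Real.exp_one_lt_d9 (by norm_num))
  exact (Real.le_log_iff_exp_le (by norm_num)).mpr h1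

lemma dfac_log_ineq (n : ℕ) :
    ((n : ℝ) + 1) + Real.log (dfac (n + 2)) ≤ ((n : ℝ) + 2) * Real.log (3 * ((n : ℝ) + 1)) := by
  induction n with
  | zero =>
    have : dfac 2 = 3 := by decide
    rw [this]
    push_cast
    norm_num
    linarith [one_le_log_three]
  | succ n ih =>
    have hd : (dfac (n + 3) : ℝ) = (dfac (n + 2) : ℝ) * (2 * (n : ℝ) + 5) := by
      have : dfac (n + 3) = dfac (n + 2) * (2 * (n + 2) + 1) := dfac_succ (n + 2)
      rw [this]; push_cast; ring
    have hdpos : (0 : ℝ) < (dfac (n + 2) : ℝ) := by exact_mod_cast dfac_pos (n + 2)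
    have hlogmul : Real.log (dfac (n + 3)) =
        Real.log (dfac (n + 2)) + Real.log (2 * (n : ℝ) + 5) := by
      rw [hd, Real.log_mul hdpos.ne' (by positivity)]
    -- C ≤ B
    have hCB : Real.log (2 * (n : ℝ) + 5) ≤ Real.log (3 * ((n : ℝ) + 2)) := by
      apply Real.log_le_log (by positivity)
      linarith
    -- B - A ≥ 1/(n+2)
    have hBA : 1 / ((n : ℝ) + 2) ≤ Real.log (3 * ((n : ℝ) + 2)) - Real.log (3 * ((n : ℝ) + 1)) := by
      have hu : (0 : ℝ) < (3 * ((n : ℝ) + 1)) / (3 * ((n : ℝ) + 2)) := by positivity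
      have h1 := Real.log_le_sub_one_of_pos hu
      rw [Real.log_div (by positivity) (by positivity)] at h1
      have : (3 * ((n : ℝ) + 1)) / (3 * ((n : ℝ) + 2)) - 1 = -(1 / ((n : ℝ) + 2)) := by
        field_simp; ring
      rw [this] at h1
      linarith
    have hfin : 1 ≤ ((n : ℝ) + 2) *
        (Real.log (3 * ((n : ℝ) + 2)) - Real.log (3 * ((n : ℝ) + 1))) := by
      have h2 : (0:ℝ) < (n:ℝ) + 2 := by positivity
      calc (1:ℝ) = ((n:ℝ) + 2) * (1 / ((n:ℝ)+2)) := by field_simp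
        _ ≤ _ := by apply mul_le_mul_of_nonneg_left hBA (le_of_lt h2)
    push_cast
    rw [show n + 1 + 2 = n + 3 from rfl,
        show (n:ℝ) + 1 + 1 = (n:ℝ) + 2 by ring,
        show (n:ℝ) + 1 + 2 = (n:ℝ) + 3 by ring]
    nlinarith [ih, hlogmul, hCB, hfin]

lemma numeric_main {W : ℕ} (hW : 2 ≤ W) :
    (W : ℝ) ^ 2 * dfac ⌈2 * Real.log W⌉₊ ≤ (6 * Real.log W) ^ (⌈2 * Real.log W⌉₊ : ℕ) := by
  set L := Real.log W with hLdef
  have hWpos : (0 : ℝ) < W := by positivity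
  have hW2 : (2 : ℝ) ≤ W := by exact_mod_cast hW
  have hlog4 : (1 : ℝ) < Real.log 4 := by
    have : Real.exp 1 < 4 := lt_trans Real.exp_one_lt_d9 (by norm_num)
    calc (1:ℝ) = Real.log (Real.exp 1) := (Real.log_exp 1).symm
      _ < Real.log 4 := Real.log_lt_log (Real.exp_pos 1) this
  have h2L : (1 : ℝ) < 2 * L := by
    have h1 : Real.log 4 = 2 * Real.log 2 := by
      rw [show (4:ℝ) = 2 ^ 2 by norm_num, Real.log_pow]; push_cast; ring
    have h2 : Real.log 2 ≤ L := Real.log_le_log (by norm_num) hW2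
    linarith
  have hLpos : 0 < L := by linarith
  set k := ⌈2 * L⌉₊ with hkdef
  have hk2 : 2 ≤ k := by
    have : (1:ℕ) < k := Nat.lt_ceil.mpr (by exact_mod_cast h2L)
    omega
  have hkL : 2 * L ≤ (k : ℝ) := Nat.le_ceil _
  have hk1L : (k : ℝ) - 1 < 2 * L := by
    have h1 : k - 1 < k := by omega
    have := Nat.lt_ceil.mp (by omega : k - 1 < ⌈2 * L⌉₊)
    have hc : ((k - 1 : ℕ) : ℝ) = (k : ℝ) - 1 := by
      have : 1 ≤ k := by omega
      push_cast [Nat.cast_sub this]; ring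
    rwa [hc] at this
  have hkpos : (0 : ℝ) < (k : ℝ) := by positivity
  have hdpos : (0 : ℝ) < (dfac k : ℝ) := by exact_mod_cast dfac_pos k
  -- the log inequality
  have hkey : 2 * L + Real.log (dfac k) ≤ (k : ℝ) * Real.log (6 * L) := by
    set a : ℝ := ((k : ℝ) - 1) / 2 with hadef
    have hapos : 0 < a := by
      have : (2:ℝ) ≤ (k:ℝ) := by exact_mod_cast hk2
      rw [hadef]; linarith
    have haL : a < L := by rw [hadef]; linarith
    -- from dfac_log_ineq with n = k - 2
    have hR1 : ((k : ℝ) - 1) + Real.log (dfac k) ≤ (k : ℝ) * Real.log (6 * a) := by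
      have h := dfac_log_ineq (k - 2)
      have hc1 : ((k - 2 : ℕ) : ℝ) = (k : ℝ) - 2 := by
        push_cast [Nat.cast_sub hk2]; ring
      rw [hc1] at h
      have hkk : k - 2 + 2 = k := by omega
      rw [hkk] at h
      have he : 3 * ((k:ℝ) - 2 + 1) = 6 * a := by rw [hadef]; ring
      have he2 : (k:ℝ) - 2 + 1 = (k:ℝ) - 1 := by ring
      rw [he] at h
      linarith [h]
    -- log(6L) - log(6a) = log L - log a ≥ 1 - a/L
    have hlog6 : Real.log (6 * L) - Real.log (6 * a) = Real.log L - Real.log a := by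
      rw [Real.log_mul (by norm_num) hLpos.ne', Real.log_mul (by norm_num) hapos.ne']
      ring
    have hsub : Real.log a - Real.log L ≤ a / L - 1 := by
      have h1 := Real.log_le_sub_one_of_pos (show 0 < a / L by positivity)
      rwa [Real.log_div hapos.ne' hLpos.ne'] at h1
    have haL1 : a / L ≤ 1 := (div_le_one hLpos).mpr (le_of_lt haL)
    have hstep : 2 * L - ((k:ℝ) - 1) ≤ (k : ℝ) * (Real.log L - Real.log a) := by
      have h1 : 1 - a / L ≤ Real.log L - Real.log a := by linarith
      have h2 : 2 * L * (1 - a / L) ≤ (k : ℝ) * (1 - a / L) := by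
        apply mul_le_mul_of_nonneg_right hkL; linarith
      have h3 : 2 * L * (1 - a / L) = 2 * L - 2 * a := by
        field_simp
      have h4 : (k:ℝ) * (1 - a/L) ≤ (k:ℝ) * (Real.log L - Real.log a) :=
        mul_le_mul_of_nonneg_left h1 (le_of_lt hkpos)
      have h5 : 2 * a = (k:ℝ) - 1 := by rw [hadef]; ring
      linarith
    nlinarith [hR1, hstep, hlog6]
  -- exponentiate
  have hLHSpos : (0:ℝ) < (W : ℝ) ^ 2 * dfac k := by positivity
  have hRHSpos : (0:ℝ) < (6 * L) ^ (k:ℕ) := by positivity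
  rw [← Real.log_le_log_iff hLHSpos hRHSpos]
  rw [Real.log_mul (by positivity) hdpos.ne', Real.log_pow, Real.log_pow]
  push_cast
  linarith [hkey]

variable {Ωp : Type} [MeasurableSpace Ωp] {μ : Measure Ωp} [IsProbabilityMeasure μ]
variable {W : ℕ} {ε : Ωp → Fin W → ℝ}

section Rademacher

variable (hmeas : ∀ j, Measurable (fun x => ε x j))
  (hpm : ∀ x j, ε x j = 1 ∨ ε x j = -1)
  (hhalf : ∀ j, μ {x | ε x j = 1} = 1 / 2)
  (hInd : iIndepFun (fun j x => ε x j) μ)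

include hmeas hpm hhalf in
lemma integral_eps (j : Fin W) : ∫ x, ε x j ∂μ = 0 := by
  classical
  set A : Set Ωp := {x | ε x j = 1} with hA
  have hAm : MeasurableSet A := (hmeas j) (measurableSet_singleton 1)
  have hpt : ∀ x, ε x j = A.indicator (fun _ => (2:ℝ)) x - 1 := by
    intro x
    rcases hpm x j with h | h
    · rw [h]
      have : x ∈ A := h
      rw [Set.indicator_of_mem this]; norm_num
    · rw [h]
      have : x ∉ A := by
        intro hx
        have : ε x j = 1 := hx
        rw [h] at this; norm_num at this
      rw [Set.indicator_of_notMem this]; norm_num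
  have : (fun x => ε x j) = fun x => A.indicator (fun _ => (2:ℝ)) x - 1 := funext hpt
  rw [this]
  rw [integral_sub]
  · rw [integral_indicator_const _ hAm, integral_const]
    rw [hA, measureReal_def, hhalf j, probReal_univ]
    norm_num [ENNReal.toReal_div]
  · exact (integrable_const (2:ℝ)).indicator hAm
  · exact integrable_const 1

include hpm in
lemma eps_pow (x : Ωp) (j : Fin W) (m : ℕ) :
    (ε x j) ^ m = if Even m then 1 else ε x j := by
  rcases hpm x j with h | h
  · rw [h]; simp
  · rw [h]
    rcases Nat.even_or_odd m with he | ho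
    · rw [he.neg_one_pow, if_pos he]
    · rw [ho.neg_one_pow, if_neg (Nat.not_even_iff_odd.mpr ho)]

include hmeas hpm hhalf in
lemma integral_const_mul_eps_pow (j : Fin W) (c : ℝ) (m : ℕ) :
    ∫ x, (c * ε x j) ^ m ∂μ = if Even m then c ^ m else 0 := by
  have hpt : ∀ x, (c * ε x j) ^ m = if Even m then c ^ m else c ^ m * ε x j := by
    intro x
    rw [mul_pow, eps_pow hpm x j m]
    split <;> simp
  simp_rw [hpt]
  split
  · simp
  · rw [integral_const_mul, integral_eps hmeas hpm hhalf j, mul_zero]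

-- boundedness helper
lemma integrable_of_bdd {f : Ωp → ℝ} (hf : Measurable f) {C : ℝ} (hC : ∀ x, |f x| ≤ C) :
    Integrable f μ :=
  ⟨hf.aestronglyMeasurable, HasFiniteIntegral.of_bounded (C := C) (ae_of_all _ (fun x => by
    simpa using hC x))⟩

include hpm in
lemma abs_rad_sum_le (b : Fin W → ℝ) (s : Finset (Fin W)) (x : Ωp) :
    |∑ j ∈ s, b j * ε x j| ≤ ∑ j ∈ s, |b j| := by
  refine (Finset.abs_sum_le_sum_abs _ _).trans (Finset.sum_le_sum fun j _ => ?_)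
  rw [abs_mul]
  have : |ε x j| = 1 := by rcases hpm x j with h | h <;> rw [h] <;> norm_num
  rw [this, mul_one]

include hmeas hpm in
lemma integrable_rad_mul_pow (b b' : Fin W → ℝ) (s s' : Finset (Fin W)) (m n : ℕ) :
    Integrable (fun x => (∑ j ∈ s, b j * ε x j) ^ m * (∑ j ∈ s', b' j * ε x j) ^ n) μ := by
  have hM : Measurable fun x => (∑ j ∈ s, b j * ε x j) ^ m * (∑ j ∈ s', b' j * ε x j) ^ n := by
    apply Measurable.mul <;> exact
      (Finset.measurable_sum _ (fun j _ => (hmeas j).const_mul _)).pow_const _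
  refine integrable_of_bdd hM (C := (∑ j ∈ s, |b j|) ^ m * (∑ j ∈ s', |b' j|) ^ n) fun x => ?_
  rw [abs_mul, abs_pow, abs_pow]
  have h1 : |∑ j ∈ s, b j * ε x j| ^ m ≤ (∑ j ∈ s, |b j|) ^ m :=
    pow_le_pow_left₀ (abs_nonneg _) (abs_rad_sum_le hpm b s x) m
  have h2 : |∑ j ∈ s', b' j * ε x j| ^ n ≤ (∑ j ∈ s', |b' j|) ^ n :=
    pow_le_pow_left₀ (abs_nonneg _) (abs_rad_sum_le hpm b' s' x) n
  exact mul_le_mul h1 h2 (by positivity) (by positivity)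

include hmeas hpm in
lemma integrable_rad_pow (b : Fin W → ℝ) (s : Finset (Fin W)) (m : ℕ) :
    Integrable (fun x => (∑ j ∈ s, b j * ε x j) ^ m) μ := by
  have := integrable_rad_mul_pow (μ := μ) hmeas hpm b b s s m 0
  simpa using this

include hmeas hpm hhalf hInd in
theorem khintchine_real (b : Fin W → ℝ) (s : Finset (Fin W)) (k : ℕ) :
    ∫ x, (∑ j ∈ s, b j * ε x j) ^ (2 * k) ∂μ
      ≤ (dfac k : ℝ) * (∑ j ∈ s, (b j) ^ 2) ^ k := by
  classical
  induction s using Finset.induction_on generalizing k with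
  | empty =>
    rcases Nat.eq_zero_or_pos k with rfl | hk
    · simp [dfac]
    · simp only [Finset.sum_empty]
      rw [zero_pow (by omega : 2 * k ≠ 0), zero_pow (by omega : k ≠ 0)]
      simp
  | insert i s hi ih =>
    -- independence of the family (fun j x => b j * ε x j)
    have hiid : iIndepFun (fun j x => b j * ε x j) μ := by
      have := hInd.comp (fun j (t : ℝ) => b j * t) (fun j => (measurable_id.const_mul (b j)))
      exact this
    have hmeasb : ∀ j, Measurable (fun x => b j * ε x j) := fun j => (hmeas j).const_mul _
    have hST : IndepFun (∑ j ∈ s, fun x => b j * ε x j) (fun x => b i * ε x i) μ :=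
      hiid.indepFun_finset_sum_of_notMem hmeasb hi
    have hSum : (∑ j ∈ s, fun x => b j * ε x j) = fun x => ∑ j ∈ s, b j * ε x j := by
      funext x; simp
    rw [hSum] at hST
    set S : Ωp → ℝ := fun x => ∑ j ∈ s, b j * ε x j with hSdef
    set T : Ωp → ℝ := fun x => b i * ε x i with hTdef
    have hSm : Measurable S := Finset.measurable_sum _ (fun j _ => (hmeas j).const_mul _)
    have hTm : Measurable T := (hmeas i).const_mul _
    -- expand
    have hexp : ∀ x, (∑ j ∈ insert i s, b j * ε x j) ^ (2 * k)
        = ∑ m ∈ Finset.range (2 * k + 1), T x ^ m * S x ^ (2 * k - m) * ((2*k).choose m : ℝ) := by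
      intro x
      rw [Finset.sum_insert hi, add_pow]
    rw [funext hexp]
    -- integrability of T^m * S^n
    have habs_eps : ∀ x (j : Fin W), |ε x j| = 1 := by
      intro x j; rcases hpm x j with h | h <;> rw [h] <;> norm_num
    have hTS_int : ∀ m n : ℕ, Integrable (fun x => T x ^ m * S x ^ n) μ := by
      intro m n
      have hM : Measurable fun x => T x ^ m * S x ^ n := (hTm.pow_const m).mul (hSm.pow_const n)
      refine integrable_of_bdd hM (C := |b i| ^ m * (∑ j ∈ s, |b j|) ^ n) fun x => ?_
      rw [abs_mul, abs_pow, abs_pow]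
      have h1 : |T x| ≤ |b i| := by
        rw [hTdef]; simp only [abs_mul, habs_eps x i, mul_one]; exact le_refl _
      exact mul_le_mul (pow_le_pow_left₀ (abs_nonneg _) h1 m)
        (pow_le_pow_left₀ (abs_nonneg _) (abs_rad_sum_le hpm b s x) n)
        (by positivity) (by positivity)
    rw [integral_finset_sum _ (fun m _ => ((hTS_int m (2*k - m)).mul_const _))]
    -- compute each term
    have hterm : ∀ m, ∫ x, T x ^ m * S x ^ (2*k - m) * ((2*k).choose m : ℝ) ∂μ
        = (if Even m then (b i) ^ m else 0) * (∫ x, S x ^ (2*k - m) ∂μ)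
            * ((2*k).choose m : ℝ) := by
      intro m
      rw [integral_mul_const]
      congr 1
      have hTSpow : IndepFun (fun x => T x ^ m) (fun x => S x ^ (2*k - m)) μ :=
        hST.symm.comp (measurable_id.pow_const m) (measurable_id.pow_const (2*k - m))
      have heq : (fun x => T x ^ m) * (fun x => S x ^ (2*k - m))
          = fun x => T x ^ m * S x ^ (2*k - m) := rfl
      have := hTSpow.integral_mul_eq_mul_integral ((hTm.pow_const m).aestronglyMeasurable)
        ((hSm.pow_const (2*k - m)).aestronglyMeasurable)
      rw [heq] at this
      rw [this]
      congr 1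
      have : ∀ x, T x ^ m = (b i * ε x i) ^ m := fun x => rfl
      rw [funext this, integral_const_mul_eps_pow hmeas hpm hhalf i (b i) m]
    simp_rw [hterm]
    -- move the ite outside
    have hite : ∀ m, (if Even m then (b i) ^ m else 0) * (∫ x, S x ^ (2*k - m) ∂μ)
          * ((2*k).choose m : ℝ)
        = if Even m then (b i) ^ m * (∫ x, S x ^ (2*k - m) ∂μ) * ((2*k).choose m : ℝ)
          else 0 := by
      intro m; split <;> simp
    simp_rw [hite]
    -- reindex: only even m contribute
    set g : ℕ → ℝ := fun m => (b i) ^ m * (∫ x, S x ^ (2*k - m) ∂μ) * ((2*k).choose m : ℝ)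
      with hgdef
    have hfilter : ∑ m ∈ Finset.range (2*k+1), (if Even m then g m else 0)
        = ∑ m ∈ (Finset.range (2*k+1)).filter Even, g m := (Finset.sum_filter _ _).symm
    rw [hfilter]
    have hbij : ∑ m ∈ (Finset.range (2*k+1)).filter Even, g m
        = ∑ j ∈ Finset.range (k+1), g (2*j) := by
      apply Finset.sum_nbij' (i := fun m => m / 2) (j := fun j => 2 * j)
      · intro m hm
        simp only [Finset.mem_filter, Finset.mem_range] at hm
        obtain ⟨hm1, c, hc⟩ := hm
        simp only [Finset.mem_range]; omega
      · intro j hj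
        simp only [Finset.mem_range] at hj
        simp only [Finset.mem_filter, Finset.mem_range]
        exact ⟨by omega, even_two_mul j⟩
      · intro m hm
        simp only [Finset.mem_filter, Finset.mem_range] at hm
        obtain ⟨hm1, c, hc⟩ := hm; omega
      · intro j hj; omega
      · intro m hm
        simp only [Finset.mem_filter, Finset.mem_range] at hm
        obtain ⟨hm1, c, hc⟩ := hm
        congr 1; omega
    rw [hbij]
    -- now bound each term using the IH and the coefficient inequality
    set Q : ℝ := ∑ j ∈ s, (b j) ^ 2 with hQdef
    have hQ0 : 0 ≤ Q := Finset.sum_nonneg fun j _ => sq_nonneg _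
    have hcoef : ∀ j, j ≤ k → (((2*k).choose (2*j) : ℝ) * dfac (k-j) : ℝ)
        ≤ (dfac k : ℝ) * (k.choose j : ℝ) := by
      intro j hjk
      have h1 : (2*k).choose (2*(k-j)) * dfac (k-j) ≤ dfac k * k.choose (k-j) :=
        choose_dfac_le (Nat.sub_le k j)
      have h2 : 2*(k-j) = 2*k - 2*j := by omega
      rw [h2, Nat.choose_symm (by omega : 2*j ≤ 2*k), Nat.choose_symm hjk] at h1
      exact_mod_cast h1
    have hterm_le : ∀ j ∈ Finset.range (k+1),
        g (2*j) ≤ (dfac k : ℝ) * ((k.choose j : ℝ) * ((b i)^2)^j * Q^(k-j)) := by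
      intro j hj
      have hjk : j ≤ k := by simp only [Finset.mem_range] at hj; omega
      have h2 : 2*k - 2*j = 2*(k-j) := by omega
      have hIH := ih (k - j)
      have hbpow : (b i)^(2*j) = ((b i)^2)^j := pow_mul (b i) 2 j
      have hb2 : (0:ℝ) ≤ ((b i)^2)^j := by positivity
      calc g (2*j) = ((b i)^2)^j * (∫ x, S x ^ (2*(k-j)) ∂μ) * ((2*k).choose (2*j) : ℝ) := by
            rw [hgdef]; simp only; rw [hbpow, h2]
        _ ≤ ((b i)^2)^j * ((dfac (k-j) : ℝ) * Q^(k-j)) * ((2*k).choose (2*j) : ℝ) := by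
            apply mul_le_mul_of_nonneg_right (mul_le_mul_of_nonneg_left hIH hb2) (by positivity)
        _ = (((2*k).choose (2*j) : ℝ) * (dfac (k-j) : ℝ)) * (((b i)^2)^j * Q^(k-j)) := by ring
        _ ≤ ((dfac k : ℝ) * (k.choose j : ℝ)) * (((b i)^2)^j * Q^(k-j)) :=
            mul_le_mul_of_nonneg_right (hcoef j hjk) (by positivity)
        _ = _ := by ring
    calc ∑ j ∈ Finset.range (k+1), g (2*j)
        ≤ ∑ j ∈ Finset.range (k+1), (dfac k : ℝ) * ((k.choose j : ℝ) * ((b i)^2)^j * Q^(k-j)) :=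
          Finset.sum_le_sum hterm_le
      _ = (dfac k : ℝ) * ((b i)^2 + Q)^k := by
          rw [← Finset.mul_sum, add_pow]
          congr 1
          apply Finset.sum_congr rfl
          intro j hj; ring
      _ = (dfac k : ℝ) * (∑ j ∈ insert i s, (b j)^2)^k := by
          rw [Finset.sum_insert hi]

include hmeas hpm hhalf hInd in
theorem khintchine_complex (c : Fin W → ℂ) (k : ℕ) :
    ∫ x, ‖∑ j, c j * (ε x j : ℂ)‖ ^ (2 * k) ∂μ
      ≤ (dfac k : ℝ) * (∑ j, ‖c j‖ ^ 2) ^ k := by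
  classical
  set X : Ωp → ℝ := fun x => ∑ j, (c j).re * ε x j with hXdef
  set Y : Ωp → ℝ := fun x => ∑ j, (c j).im * ε x j with hYdef
  set sX : ℝ := ∑ j, (c j).re ^ 2 with hsXdef
  set sY : ℝ := ∑ j, (c j).im ^ 2 with hsYdef
  have hsX0 : 0 ≤ sX := Finset.sum_nonneg fun j _ => sq_nonneg _
  have hsY0 : 0 ≤ sY := Finset.sum_nonneg fun j _ => sq_nonneg _
  have hsum : ∑ j, ‖c j‖ ^ 2 = sX + sY := by
    rw [hsXdef, hsYdef, ← Finset.sum_add_distrib]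
    apply Finset.sum_congr rfl
    intro j _
    rw [Complex.sq_norm, Complex.normSq_apply]; ring
  have hre : ∀ x, (∑ j, c j * (ε x j : ℂ)).re = X x := by
    intro x; rw [Complex.re_sum]
    apply Finset.sum_congr rfl
    intro j _; simp [Complex.mul_re]
  have him : ∀ x, (∑ j, c j * (ε x j : ℂ)).im = Y x := by
    intro x; rw [Complex.im_sum]
    apply Finset.sum_congr rfl
    intro j _; simp [Complex.mul_im]
  have hpt : ∀ x, ‖∑ j, c j * (ε x j : ℂ)‖ ^ (2 * k)
      = ∑ i ∈ Finset.range (k+1), X x ^ (2*i) * Y x ^ (2*(k-i)) * (k.choose i : ℝ) := by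
    intro x
    have h1 : ‖∑ j, c j * (ε x j : ℂ)‖ ^ (2 * k) = (X x ^ 2 + Y x ^ 2) ^ k := by
      rw [pow_mul, Complex.sq_norm, Complex.normSq_apply, hre, him]
      ring_nf
    rw [h1, add_pow]
    apply Finset.sum_congr rfl
    intro i _
    rw [← pow_mul, ← pow_mul]
  rw [funext hpt, hsum]
  have hXint := fun m n => integrable_rad_mul_pow (μ := μ) hmeas hpm
    (fun j => (c j).re) (fun j => (c j).im) Finset.univ Finset.univ m n
  rw [integral_finset_sum _ (fun i _ => (hXint (2*i) (2*(k-i))).mul_const _)]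
  -- key bound for each mixed moment
  have hkey : ∀ i, i ≤ k → ∫ x, X x ^ (2*i) * Y x ^ (2*(k-i)) ∂μ
      ≤ (dfac k : ℝ) * sX ^ i * sY ^ (k-i) := by
    intro i hik
    have hKX := khintchine_real hmeas hpm hhalf hInd (fun j => (c j).re) Finset.univ k
    have hKY := khintchine_real hmeas hpm hhalf hInd (fun j => (c j).im) Finset.univ k
    rcases Nat.eq_zero_or_pos i with rfl | hi0
    · simp only [mul_zero, pow_zero, one_mul, Nat.sub_zero]
      have hKY' := khintchine_real hmeas hpm hhalf hInd (fun j => (c j).im) Finset.univ k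
      calc ∫ x, Y x ^ (2*k) ∂μ ≤ (dfac k : ℝ) * sY ^ k := hKY'
        _ = (dfac k : ℝ) * sX ^ 0 * sY ^ (k - 0) := by simp
        _ = _ := by norm_num
    rcases Nat.lt_or_ge i k with hik' | hik'
    swap
    · have hieq : i = k := le_antisymm hik hik'
      subst hieq
      simp only [Nat.sub_self, mul_zero, pow_zero, mul_one]
      calc ∫ x, X x ^ (2*i) ∂μ ≤ (dfac i : ℝ) * sX ^ i :=
            khintchine_real hmeas hpm hhalf hInd (fun j => (c j).re) Finset.univ i
        _ = _ := by ring
    -- now 0 < i < k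
    have hk0 : 0 < k := lt_of_le_of_lt (Nat.zero_le i) hik'
    rcases eq_or_lt_of_le hsX0 with hsX | hsX
    · -- sX = 0 : X ≡ 0
      have hX0 : ∀ x, X x = 0 := by
        intro x
        rw [hXdef]
        apply Finset.sum_eq_zero
        intro j _
        have h1 : ∀ j ∈ Finset.univ, (0:ℝ) ≤ (c j).re ^ 2 := fun j _ => sq_nonneg _
        have h2 := (Finset.sum_eq_zero_iff_of_nonneg h1).mp hsX.symm j (Finset.mem_univ j)
        have : (c j).re = 0 := by
          have := sq_eq_zero_iff.mp h2; exact this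
        rw [this, zero_mul]
      have : ∀ x, X x ^ (2*i) * Y x ^ (2*(k-i)) = 0 := by
        intro x; rw [hX0 x, zero_pow (by omega : 2*i ≠ 0), zero_mul]
      rw [funext this, integral_zero]
      positivity
    rcases eq_or_lt_of_le hsY0 with hsY | hsY
    · have hY0 : ∀ x, Y x = 0 := by
        intro x
        rw [hYdef]
        apply Finset.sum_eq_zero
        intro j _
        have h1 : ∀ j ∈ Finset.univ, (0:ℝ) ≤ (c j).im ^ 2 := fun j _ => sq_nonneg _
        have h2 := (Finset.sum_eq_zero_iff_of_nonneg h1).mp hsY.symm j (Finset.mem_univ j)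
        have : (c j).im = 0 := sq_eq_zero_iff.mp h2
        rw [this, zero_mul]
      have : ∀ x, X x ^ (2*i) * Y x ^ (2*(k-i)) = 0 := by
        intro x; rw [hY0 x, zero_pow (by omega : 2*(k-i) ≠ 0), mul_zero]
      rw [funext this, integral_zero]
      positivity
    -- main Young case
    set w1 : ℝ := (i : ℝ) / k with hw1def
    set w2 : ℝ := ((k - i : ℕ) : ℝ) / k with hw2def
    have hkne : (k : ℝ) ≠ 0 := by positivity
    have hw1pos : 0 ≤ w1 := by positivity
    have hw2pos : 0 ≤ w2 := by positivity
    have hw12 : w1 + w2 = 1 := by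
      rw [hw1def, hw2def, ← add_div, Nat.cast_sub hik]
      field_simp
      ring
    have hYoung : ∀ x, X x ^ (2*i) * Y x ^ (2*(k-i))
        ≤ sX ^ i * sY ^ (k-i) *
          (w1 * (X x ^ 2 / sX) ^ k + w2 * (Y x ^ 2 / sY) ^ k) := by
      intro x
      set u : ℝ := X x ^ 2 / sX with hudef
      set v : ℝ := Y x ^ 2 / sY with hvdef
      have hu0 : 0 ≤ u := by positivity
      have hv0 : 0 ≤ v := by positivity
      have hg := Real.geom_mean_le_arith_mean2_weighted hw1pos hw2pos
        (pow_nonneg hu0 k) (pow_nonneg hv0 k) hw12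
      have hrw : ∀ (t : ℝ) (m : ℕ), 0 ≤ t → m ≤ k →
          (t ^ k) ^ ((m : ℝ) / k) = t ^ m := by
        intro t m ht hmk
        rw [← Real.rpow_natCast t k, ← Real.rpow_natCast t m,
          ← Real.rpow_mul ht]
        congr 1
        field_simp
      rw [hrw u i hu0 hik, hrw v (k - i) hv0 (Nat.sub_le k i)] at hg
      -- now: u^i * v^(k-i) ≤ w1 * u^k + w2 * v^k
      have hmul : sX ^ i * sY ^ (k-i) * (u ^ i * v ^ (k-i))
          = X x ^ (2*i) * Y x ^ (2*(k-i)) := by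
        rw [hudef, hvdef, div_pow, div_pow, pow_mul, pow_mul]
        field_simp
      calc X x ^ (2*i) * Y x ^ (2*(k-i)) = sX ^ i * sY ^ (k-i) * (u ^ i * v ^ (k-i)) :=
            hmul.symm
        _ ≤ sX ^ i * sY ^ (k-i) * (w1 * u ^ k + w2 * v ^ k) := by
            apply mul_le_mul_of_nonneg_left hg (by positivity)
    -- integrate
    have hXkint : Integrable (fun x => (X x ^ 2 / sX) ^ k) μ := by
      have heq : (fun x => (X x ^ 2 / sX) ^ k) = fun x => X x ^ (2*k) * ((sX ^ k)⁻¹ * 1) := by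
        funext x; rw [div_pow, ← pow_mul, div_eq_mul_inv, mul_one]
      rw [heq]
      simpa using (integrable_rad_pow (μ := μ) hmeas hpm (fun j => (c j).re) Finset.univ
        (2*k)).mul_const ((sX ^ k)⁻¹ * 1)
    have hYkint : Integrable (fun x => (Y x ^ 2 / sY) ^ k) μ := by
      have heq : (fun x => (Y x ^ 2 / sY) ^ k) = fun x => Y x ^ (2*k) * ((sY ^ k)⁻¹ * 1) := by
        funext x; rw [div_pow, ← pow_mul, div_eq_mul_inv, mul_one]
      rw [heq]
      simpa using (integrable_rad_pow (μ := μ) hmeas hpm (fun j => (c j).im) Finset.univ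
        (2*k)).mul_const ((sY ^ k)⁻¹ * 1)
    have hint1 : ∫ x, (X x ^ 2 / sX) ^ k ∂μ ≤ (dfac k : ℝ) := by
      have heq : ∀ x, (X x ^ 2 / sX) ^ k = X x ^ (2*k) * (sX ^ k)⁻¹ := by
        intro x; rw [div_pow, ← pow_mul, div_eq_mul_inv]
      rw [funext heq, integral_mul_const]
      have hKX' : ∫ x, X x ^ (2*k) ∂μ ≤ (dfac k : ℝ) * sX ^ k :=
        khintchine_real hmeas hpm hhalf hInd (fun j => (c j).re) Finset.univ k
      calc (∫ x, X x ^ (2*k) ∂μ) * (sX ^ k)⁻¹ ≤ ((dfac k : ℝ) * sX ^ k) * (sX ^ k)⁻¹ := by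
            apply mul_le_mul_of_nonneg_right hKX' (by positivity)
        _ = (dfac k : ℝ) := by
            rw [mul_assoc, mul_inv_cancel₀ (by positivity : sX ^ k ≠ 0), mul_one]
    have hint2 : ∫ x, (Y x ^ 2 / sY) ^ k ∂μ ≤ (dfac k : ℝ) := by
      have heq : ∀ x, (Y x ^ 2 / sY) ^ k = Y x ^ (2*k) * (sY ^ k)⁻¹ := by
        intro x; rw [div_pow, ← pow_mul, div_eq_mul_inv]
      rw [funext heq, integral_mul_const]
      have hKY' : ∫ x, Y x ^ (2*k) ∂μ ≤ (dfac k : ℝ) * sY ^ k :=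
        khintchine_real hmeas hpm hhalf hInd (fun j => (c j).im) Finset.univ k
      calc (∫ x, Y x ^ (2*k) ∂μ) * (sY ^ k)⁻¹ ≤ ((dfac k : ℝ) * sY ^ k) * (sY ^ k)⁻¹ := by
            apply mul_le_mul_of_nonneg_right hKY' (by positivity)
        _ = (dfac k : ℝ) := by
            rw [mul_assoc, mul_inv_cancel₀ (by positivity : sY ^ k ≠ 0), mul_one]
    have hRHSint : Integrable (fun x => sX ^ i * sY ^ (k-i) *
        (w1 * (X x ^ 2 / sX) ^ k + w2 * (Y x ^ 2 / sY) ^ k)) μ :=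
      (((hXkint.const_mul w1).add (hYkint.const_mul w2)).const_mul _)
    calc ∫ x, X x ^ (2*i) * Y x ^ (2*(k-i)) ∂μ
        ≤ ∫ x, sX ^ i * sY ^ (k-i) *
            (w1 * (X x ^ 2 / sX) ^ k + w2 * (Y x ^ 2 / sY) ^ k) ∂μ :=
          integral_mono (hXint (2*i) (2*(k-i))) hRHSint hYoung
      _ = sX ^ i * sY ^ (k-i) *
            (w1 * ∫ x, (X x ^ 2 / sX) ^ k ∂μ + w2 * ∫ x, (Y x ^ 2 / sY) ^ k ∂μ) := by
          rw [integral_const_mul, integral_add (hXkint.const_mul w1) (hYkint.const_mul w2),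
            integral_const_mul, integral_const_mul]
      _ ≤ sX ^ i * sY ^ (k-i) * (w1 * (dfac k : ℝ) + w2 * (dfac k : ℝ)) := by
          apply mul_le_mul_of_nonneg_left _ (by positivity)
          have h1 := mul_le_mul_of_nonneg_left hint1 hw1pos
          have h2 := mul_le_mul_of_nonneg_left hint2 hw2pos
          linarith
      _ = (dfac k : ℝ) * sX ^ i * sY ^ (k-i) := by
          rw [← add_mul, hw12, one_mul]; ring
  -- assemble
  calc ∑ i ∈ Finset.range (k+1), ∫ x, X x ^ (2*i) * Y x ^ (2*(k-i)) * (k.choose i : ℝ) ∂μ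
      ≤ ∑ i ∈ Finset.range (k+1), (dfac k : ℝ) * sX ^ i * sY ^ (k-i) * (k.choose i : ℝ) := by
        apply Finset.sum_le_sum
        intro i hi
        have hik : i ≤ k := by simp only [Finset.mem_range] at hi; omega
        rw [integral_mul_const]
        exact mul_le_mul_of_nonneg_right (hkey i hik) (by positivity)
    _ = (dfac k : ℝ) * (sX + sY) ^ k := by
        rw [add_pow, Finset.mul_sum]
        apply Finset.sum_congr rfl
        intro i _; ring

end Rademacher

lemma moment_mono {f : Ωp → ℝ} (hm : Measurable f) (h0 : ∀ x, 0 ≤ f x) {C : ℝ}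
    (hC : ∀ x, f x ≤ C) {s t : ℝ} (hs : 0 < s) (hst : s ≤ t) :
    (∫ x, f x ^ s ∂μ) ^ (1/s) ≤ (∫ x, f x ^ t ∂μ) ^ (1/t) := by
  have ht : 0 < t := lt_of_lt_of_le hs hst
  have hint : ∀ u : ℝ, 0 < u → Integrable (fun x => f x ^ u) μ := by
    intro u hu
    refine integrable_of_bdd ((Real.continuous_rpow_const (le_of_lt hu)).measurable.comp hm) (C := max (C ^ u) 0) fun x => ?_
    rw [abs_of_nonneg (Real.rpow_nonneg (h0 x) u)]
    exact le_max_of_le_left (Real.rpow_le_rpow (h0 x) (hC x) (le_of_lt hu))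
  have key : ∀ u : ℝ, 0 < u →
      eLpNorm f (ENNReal.ofReal u) μ = (ENNReal.ofReal (∫ x, f x ^ u ∂μ)) ^ (1/u) := by
    intro u hu
    rw [eLpNorm_eq_lintegral_rpow_enorm_toReal (by simp [hu, ENNReal.ofReal_pos.mpr hu]) ENNReal.ofReal_ne_top]
    rw [ENNReal.toReal_ofReal (le_of_lt hu)]
    congr 1
    rw [ofReal_integral_eq_lintegral_ofReal (hint u hu)
      (ae_of_all _ (fun x => Real.rpow_nonneg (h0 x) u))]
    apply lintegral_congr
    intro x
    rw [← ENNReal.ofReal_rpow_of_nonneg (h0 x) (le_of_lt hu)]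
    congr 1
    rw [← ofReal_norm_eq_enorm, Real.norm_of_nonneg (h0 x)]
  have hmono : eLpNorm f (ENNReal.ofReal s) μ ≤ eLpNorm f (ENNReal.ofReal t) μ :=
    eLpNorm_le_eLpNorm_of_exponent_le (ENNReal.ofReal_le_ofReal hst) hm.aestronglyMeasurable
  rw [key s hs, key t ht] at hmono
  have hs0 : 0 ≤ ∫ x, f x ^ s ∂μ := integral_nonneg fun x => Real.rpow_nonneg (h0 x) s
  have ht0 : 0 ≤ ∫ x, f x ^ t ∂μ := integral_nonneg fun x => Real.rpow_nonneg (h0 x) t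
  have hne : (ENNReal.ofReal (∫ x, f x ^ t ∂μ)) ^ (1/t) ≠ ⊤ :=
    ENNReal.rpow_ne_top_of_nonneg (by positivity) ENNReal.ofReal_ne_top
  have := ENNReal.toReal_mono hne hmono
  rwa [← ENNReal.toReal_rpow, ← ENNReal.toReal_rpow, ENNReal.toReal_ofReal hs0,
    ENNReal.toReal_ofReal ht0] at this

lemma demod_entry (W R : ℕ) (ε : Fin W → ℝ) (r : Fin R) (w : Fin W) :
    demodMatrix W R ε r w = ∑ j, (sampMatrix W R r j * dftMatrix W j w) * (ε j : ℂ) := by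
  rw [demodMatrix, Matrix.mul_assoc, Matrix.mul_apply]
  apply Finset.sum_congr rfl
  intro j _
  rw [Matrix.diagonal_mul]
  ring

lemma dft_abs {W : ℕ} (hW : 0 < W) (n w : Fin W) :
    ‖dftMatrix W n w‖ = (Real.sqrt W)⁻¹ := by
  rw [dftMatrix, norm_mul, norm_inv, Complex.norm_real,
    Real.norm_of_nonneg (Real.sqrt_nonneg _)]
  have hz : -2 * Real.pi * Complex.I * (n.val : ℂ) * (w.val : ℂ) / (W : ℂ)
      = Complex.I * ((-2 * Real.pi * n.val * w.val / W : ℝ) : ℂ) := by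
    push_cast
    ring
  rw [hz, Complex.norm_exp]
  have : (Complex.I * ((-2 * Real.pi * n.val * w.val / W : ℝ) : ℂ)).re = 0 := by
    simp [Complex.mul_re]
  rw [this, Real.exp_zero, mul_one]

lemma samp_abs_sq {W R : ℕ} (r : Fin R) (j : Fin W) :
    ‖sampMatrix W R r j‖ ^ 2
      = if r.val * (W / R) ≤ j.val ∧ j.val < (r.val + 1) * (W / R) then (1:ℝ) else 0 := by
  rw [sampMatrix]
  split <;> simp

lemma coeff_norm {W R : ℕ} (hR : 0 < R) (hdvd : R ∣ W) (hW : 0 < W) (r : Fin R) (w : Fin W) :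
    ∑ j, ‖sampMatrix W R r j * dftMatrix W j w‖ ^ 2 = 1 / (R : ℝ) := by
  have hWR : R * (W / R) = W := Nat.mul_div_cancel' hdvd
  have heach : ∀ j : Fin W, ‖sampMatrix W R r j * dftMatrix W j w‖ ^ 2
      = (if r.val * (W / R) ≤ j.val ∧ j.val < (r.val + 1) * (W / R) then (1:ℝ) else 0)
        * (W : ℝ)⁻¹ := by
    intro j
    rw [norm_mul, mul_pow, samp_abs_sq, dft_abs hW]
    congr 1
    rw [← Real.sqrt_inv, Real.sq_sqrt (by positivity)]
  rw [Finset.sum_congr rfl (fun j _ => heach j)]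
  rw [← Finset.sum_mul]
  have hcount : ∑ j : Fin W,
      (if r.val * (W / R) ≤ j.val ∧ j.val < (r.val + 1) * (W / R) then (1:ℝ) else 0)
      = (W / R : ℕ) := by
    rw [Fin.sum_univ_eq_sum_range
      (fun t => if r.val * (W / R) ≤ t ∧ t < (r.val + 1) * (W / R) then (1:ℝ) else 0)]
    have hmem : ∀ t, (r.val * (W / R) ≤ t ∧ t < (r.val + 1) * (W / R))
        ↔ t ∈ Finset.Ico (r.val * (W / R)) ((r.val + 1) * (W / R)) := by
      intro t; rw [Finset.mem_Ico]
    simp_rw [hmem]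
    rw [Finset.sum_ite_mem]
    have hsub : Finset.Ico (r.val * (W / R)) ((r.val + 1) * (W / R)) ⊆ Finset.range W := by
      intro t ht
      rw [Finset.mem_Ico] at ht
      rw [Finset.mem_range]
      have h1 : (r.val + 1) * (W / R) ≤ R * (W / R) := by
        apply Nat.mul_le_mul_right
        omega
      omega
    rw [Finset.inter_eq_right.mpr hsub, Finset.sum_const, Nat.card_Ico]
    have hmm : (r.val + 1) * (W / R) = r.val * (W / R) + W / R := Nat.succ_mul r.val (W / R)
    rw [hmm, Nat.add_sub_cancel_left]
    simp
  rw [hcount]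
  have hRW : ((W / R : ℕ) : ℝ) = (W : ℝ) / R := by
    rw [Nat.cast_div hdvd (by positivity)]
  rw [hRW]
  have hW' : (W:ℝ) ≠ 0 := by positivity
  have hR' : (R:ℝ) ≠ 0 := by positivity
  field_simp

end Aux

/-- For `2 ≤ p ≤ 4·log W`, the `p`-th moment of the maximum entry of the random
demodulator matrix satisfies `(E[(max_{r,ω} |Φ_{r,ω}|)^p])^{1/p} ≤ √(6·log W / R)`. -/

theorem max_entry_moment_bound (W R : ℕ) (hR : 0 < R) (hdvd : R ∣ W) (hW : 2 ≤ W)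
    {Ωp : Type} [MeasurableSpace Ωp] (μ : Measure Ωp) [IsProbabilityMeasure μ]
    (ε : Ωp → Fin W → ℝ) (hrad : IsRademacherFamily μ ε)
    (p : ℝ) (hp2 : 2 ≤ p) (hp4 : p ≤ 4 * Real.log W) :
    (∫ x, (⨆ r : Fin R, ⨆ w : Fin W, ‖demodMatrix W R (ε x) r w‖) ^ p ∂μ)
        ^ (1 / p)
      ≤ Real.sqrt (6 * Real.log W / R) := by
  classical
  obtain ⟨hmeas, hpm, hhalf, hInd⟩ := hrad
  have hWpos : 0 < W := by omega
  have hRleW : R ≤ W := Nat.le_of_dvd hWpos hdvd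
  haveI : Nonempty (Fin R) := ⟨⟨0, hR⟩⟩
  haveI : Nonempty (Fin W) := ⟨⟨0, hWpos⟩⟩
  set L := Real.log W with hLdef
  have hLpos : 0 < L := Real.log_pos (by exact_mod_cast hW)
  set k := ⌈2 * L⌉₊ with hkdef
  have hkL : 2 * L ≤ (k : ℝ) := Nat.le_ceil _
  have hk1 : 1 ≤ k := Nat.ceil_pos.mpr (by positivity)
  set q : ℝ := ((2 * k : ℕ) : ℝ) with hqdef
  have hq0 : 0 < q := by rw [hqdef]; push_cast; positivity
  have hpq : p ≤ q := by
    rw [hqdef]; push_cast; linarith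
  set c : Fin R → Fin W → Fin W → ℂ := fun r w j => sampMatrix W R r j * dftMatrix W j w
    with hcdef
  have hentry : ∀ (x : Ωp) r w, demodMatrix W R (ε x) r w = ∑ j, c r w j * ((ε x j : ℝ) : ℂ) :=
    fun x r w => demod_entry W R (ε x) r w
  set F : Fin R → Fin W → Ωp → ℝ := fun r w x => ‖demodMatrix W R (ε x) r w‖
    with hFdef
  set f : Ωp → ℝ := fun x => ⨆ r, ⨆ w, F r w x with hfdef
  have habs_eps : ∀ (x : Ωp) (j : Fin W), |ε x j| = 1 := by
    intro x j; rcases hpm x j with h | h <;> rw [h] <;> norm_num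
  -- measurability of entries
  have hFm : ∀ r w, Measurable (F r w) := by
    intro r w
    have heq : F r w = fun x => ‖∑ j, c r w j * ((ε x j : ℝ) : ℂ)‖ := by
      funext x; rw [hFdef]; simp only; rw [hentry x r w]
    rw [heq]
    apply continuous_norm.measurable.comp
    apply Finset.measurable_sum
    intro j _
    exact (Complex.measurable_ofReal.comp (hmeas j)).const_mul _
  have hfm : Measurable f := Measurable.iSup fun r => Measurable.iSup fun w => hFm r w
  -- bounds
  have hcb : ∀ r w j, ‖c r w j‖ ≤ 1 := by
    intro r w j
    rw [hcdef]; simp only; rw [norm_mul]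
    have h1 : ‖sampMatrix W R r j‖ ≤ 1 := by
      rw [sampMatrix]; split <;> simp
    have h2 : ‖dftMatrix W j w‖ ≤ 1 := by
      rw [dft_abs hWpos]
      have : (1:ℝ) ≤ Real.sqrt W := by
        rw [show (1:ℝ) = Real.sqrt 1 by simp]
        apply Real.sqrt_le_sqrt; exact_mod_cast hWpos
      exact inv_le_one_of_one_le₀ this
    calc ‖sampMatrix W R r j‖ * ‖dftMatrix W j w‖
        ≤ 1 * 1 := mul_le_mul h1 h2 (by positivity) (by norm_num)
      _ = 1 := by norm_num
  have hFb : ∀ r w x, F r w x ≤ W := by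
    intro r w x
    rw [hFdef]; simp only; rw [hentry x r w]
    calc ‖∑ j, c r w j * ((ε x j : ℝ) : ℂ)‖
        ≤ ∑ j, ‖c r w j * ((ε x j : ℝ) : ℂ)‖ :=
          norm_sum_le _ _
      _ ≤ ∑ _j : Fin W, (1:ℝ) := by
          apply Finset.sum_le_sum
          intro j _
          rw [norm_mul, Complex.norm_real, Real.norm_eq_abs, habs_eps x j, mul_one]
          exact hcb r w j
      _ = W := by simp
  have hF0 : ∀ r w x, 0 ≤ F r w x := fun r w x => norm_nonneg _
  have hbddW : ∀ x r, BddAbove (Set.range fun w => F r w x) :=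
    fun x r => Set.Finite.bddAbove (Set.finite_range _)
  have hbddR : ∀ x, BddAbove (Set.range fun r => ⨆ w, F r w x) :=
    fun x => Set.Finite.bddAbove (Set.finite_range _)
  have hf0 : ∀ x, 0 ≤ f x := by
    intro x
    obtain ⟨r0⟩ := (inferInstance : Nonempty (Fin R))
    obtain ⟨w0⟩ := (inferInstance : Nonempty (Fin W))
    calc (0:ℝ) ≤ F r0 w0 x := hF0 r0 w0 x
      _ ≤ ⨆ w, F r0 w x := le_ciSup (hbddW x r0) w0
      _ ≤ f x := le_ciSup (hbddR x) r0
  have hfW : ∀ x, f x ≤ W := by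
    intro x
    apply ciSup_le; intro r
    apply ciSup_le; intro w
    exact hFb r w x
  -- step 1 : moment monotonicity
  have step1 : (∫ x, f x ^ p ∂μ) ^ (1/p) ≤ (∫ x, f x ^ q ∂μ) ^ (1/q) :=
    moment_mono hfm hf0 hfW (by linarith) hpq
  -- step 2 : rpow → pow
  have hq_pow : ∀ x, f x ^ q = f x ^ (2*k : ℕ) := by
    intro x; rw [hqdef, Real.rpow_natCast]
  -- entry moments
  have hnorm : ∀ r w, ∑ j, ‖c r w j‖ ^ 2 = 1 / (R:ℝ) :=
    fun r w => coeff_norm hR hdvd hWpos r w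
  have hmom : ∀ r w, ∫ x, F r w x ^ (2*k : ℕ) ∂μ ≤ (dfac k : ℝ) * (1/(R:ℝ)) ^ k := by
    intro r w
    have heq : (fun x => F r w x ^ (2*k:ℕ))
        = fun x => ‖∑ j, c r w j * ((ε x j : ℝ) : ℂ)‖ ^ (2*k:ℕ) := by
      funext x; rw [hFdef]; simp only; rw [hentry x r w]
    rw [heq]
    calc ∫ x, ‖∑ j, c r w j * ((ε x j : ℝ) : ℂ)‖ ^ (2*k:ℕ) ∂μ
        ≤ (dfac k : ℝ) * (∑ j, ‖c r w j‖ ^ 2) ^ k :=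
          khintchine_complex hmeas hpm hhalf hInd (c r w) k
      _ = (dfac k : ℝ) * (1/(R:ℝ)) ^ k := by rw [hnorm r w]
  -- integrability
  have hFint : ∀ r w, Integrable (fun x => F r w x ^ (2*k:ℕ)) μ := by
    intro r w
    refine integrable_of_bdd ((hFm r w).pow_const _) (C := (W:ℝ) ^ (2*k:ℕ)) fun x => ?_
    rw [abs_pow, abs_of_nonneg (hF0 r w x)]
    exact pow_le_pow_left₀ (hF0 r w x) (hFb r w x) _
  have hfint : Integrable (fun x => f x ^ (2*k:ℕ)) μ := by
    refine integrable_of_bdd (hfm.pow_const _) (C := (W:ℝ) ^ (2*k:ℕ)) fun x => ?_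
    rw [abs_pow, abs_of_nonneg (hf0 x)]
    exact pow_le_pow_left₀ (hf0 x) (hfW x) _
  have hGint : Integrable (fun x => ∑ r, ∑ w, F r w x ^ (2*k:ℕ)) μ := by
    apply integrable_finset_sum
    intro r _
    apply integrable_finset_sum
    intro w _
    exact hFint r w
  -- pointwise domination of sup power by sum
  have hfpow_le : ∀ x, f x ^ (2*k:ℕ) ≤ ∑ r, ∑ w, F r w x ^ (2*k:ℕ) := by
    intro x
    obtain ⟨r0, hr0⟩ := exists_eq_ciSup_of_finite (f := fun r => ⨆ w, F r w x)
    obtain ⟨w0, hw0⟩ := exists_eq_ciSup_of_finite (f := fun w => F r0 w x)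
    have hfx : f x = F r0 w0 x := by rw [hfdef]; simp only; rw [← hr0, ← hw0]
    rw [hfx]
    calc F r0 w0 x ^ (2*k:ℕ) ≤ ∑ w, F r0 w x ^ (2*k:ℕ) :=
          Finset.single_le_sum (f := fun w => F r0 w x ^ (2*k:ℕ))
            (fun w _ => by positivity) (Finset.mem_univ w0)
      _ ≤ ∑ r, ∑ w, F r w x ^ (2*k:ℕ) :=
          Finset.single_le_sum (f := fun r => ∑ w, F r w x ^ (2*k:ℕ))
            (fun r _ => Finset.sum_nonneg fun w _ => by positivity) (Finset.mem_univ r0)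
  -- step 3 : bound ∫ f^{2k}
  have step3 : ∫ x, f x ^ (2*k:ℕ) ∂μ ≤ (R:ℝ) * W * ((dfac k : ℝ) * (1/(R:ℝ)) ^ k) := by
    calc ∫ x, f x ^ (2*k:ℕ) ∂μ ≤ ∫ x, ∑ r, ∑ w, F r w x ^ (2*k:ℕ) ∂μ :=
          integral_mono hfint hGint hfpow_le
      _ = ∑ r, ∑ w, ∫ x, F r w x ^ (2*k:ℕ) ∂μ := by
          rw [integral_finset_sum _ (fun r _ => integrable_finset_sum _ (fun w _ => hFint r w))]
          apply Finset.sum_congr rfl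
          intro r _
          rw [integral_finset_sum _ (fun w _ => hFint r w)]
      _ ≤ ∑ _r : Fin R, ∑ _w : Fin W, ((dfac k : ℝ) * (1/(R:ℝ)) ^ k) := by
          apply Finset.sum_le_sum; intro r _
          apply Finset.sum_le_sum; intro w _
          exact hmom r w
      _ = (R:ℝ) * W * ((dfac k : ℝ) * (1/(R:ℝ)) ^ k) := by
          simp [Finset.sum_const, mul_assoc]
  -- step 4 : the numeric bound
  have hbase : (R:ℝ) * W * ((dfac k : ℝ) * (1/(R:ℝ)) ^ k) ≤ (6 * L / R) ^ k := by
    have h1 : (R:ℝ) * W * (dfac k : ℝ) ≤ (W:ℝ)^2 * (dfac k : ℝ) := by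
      have hRW' : (R:ℝ) ≤ W := by exact_mod_cast hRleW
      have hW0 : (0:ℝ) ≤ W := by positivity
      have hd0 : (0:ℝ) ≤ (dfac k : ℝ) := by positivity
      have hRW2 : (R:ℝ) * W ≤ (W:ℝ)^2 := by nlinarith
      exact mul_le_mul_of_nonneg_right hRW2 hd0
    have h2 : (W:ℝ)^2 * (dfac k : ℝ) ≤ (6 * L) ^ k := numeric_main hW
    have h3 : ((6:ℝ) * L / R) ^ k = (6 * L) ^ k * (1/(R:ℝ)) ^ k := by
      rw [← mul_pow, mul_one_div]
    rw [h3]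
    have hu : (0:ℝ) ≤ (1/(R:ℝ)) ^ k := by positivity
    calc (R:ℝ) * W * ((dfac k : ℝ) * (1/(R:ℝ)) ^ k)
        = ((R:ℝ) * W * (dfac k : ℝ)) * (1/(R:ℝ)) ^ k := by ring
      _ ≤ ((6:ℝ) * L) ^ k * (1/(R:ℝ)) ^ k := by
          apply mul_le_mul_of_nonneg_right (le_trans h1 h2) hu
  have hint_nonneg : 0 ≤ ∫ x, f x ^ (2*k:ℕ) ∂μ :=
    integral_nonneg fun x => pow_nonneg (hf0 x) _
  have step4 : (∫ x, f x ^ (2*k:ℕ) ∂μ) ^ (1/q) ≤ Real.sqrt (6 * L / R) := by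
    have hBnn : (0:ℝ) ≤ 6 * L / R := by positivity
    have h1 : (∫ x, f x ^ (2*k:ℕ) ∂μ) ^ (1/q) ≤ ((6 * L / R) ^ k) ^ (1/q) :=
      Real.rpow_le_rpow hint_nonneg (le_trans step3 hbase) (by positivity)
    have h2 : ((6 * L / R) ^ k) ^ (1/q) = Real.sqrt (6 * L / R) := by
      rw [← Real.rpow_natCast (6 * L / R) k, ← Real.rpow_mul hBnn]
      have hkq : (k:ℝ) * (1/q) = 1/2 := by
        rw [hqdef]
        have : (k:ℝ) ≠ 0 := (by exact_mod_cast Nat.pos_of_ne_zero (by omega) : (0:ℝ) < (k:ℝ)).ne'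
        push_cast
        field_simp
      rw [hkq, Real.sqrt_eq_rpow]
    rw [h2] at h1
    exact h1
  -- assemble
  calc (∫ x, (⨆ r : Fin R, ⨆ w : Fin W, ‖demodMatrix W R (ε x) r w‖) ^ p ∂μ) ^ (1/p)
      = (∫ x, f x ^ p ∂μ) ^ (1/p) := rfl
    _ ≤ (∫ x, f x ^ q ∂μ) ^ (1/q) := step1
    _ = (∫ x, f x ^ (2*k:ℕ) ∂μ) ^ (1/q) := by rw [funext hq_pow]
    _ ≤ Real.sqrt (6 * L / R) := step4
end
end

section
/- (Column Norms) There is a universal constant C > 0 with the following property. For every δ ∈ (0,1], if W ≥ 2 and the sampling rate satisfies R ≥ C·δ^{-2}·log W, then P( max_{ω} | ‖φ_ω‖₂² − 1 | ≥ δ ) ≤ 1/W, where the maximum is over all columns φ_ω of the random demodulator matrix. -/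
open MeasureTheory ProbabilityTheory Matrix
open scoped BigOperators ENNReal

noncomputable section

namespace CNAux

/-- sign of a boolean -/
def sg (b : Bool) : ℝ := if b then 1 else -1

lemma sg_sq (b : Bool) : sg b ^ 2 = 1 := by cases b <;> simp [sg]

lemma abs_sg (b : Bool) : |sg b| = 1 := by cases b <;> simp [sg]

/-- parameter recursion -/
def gf (μ : ℝ) : ℝ := μ + 2 * μ ^ 2

def B : ℕ → ℝ → ℝ
  | 0, _ => 0
  | n+1, μ => μ + B n (gf μ)

lemma B_bound : ∀ (n : ℕ) (μ a : ℝ), |μ| ≤ a → a * n ≤ 1/8 →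
    B n μ ≤ n * μ + 4 * a ^ 2 * n ^ 2 := by
  intro n
  induction n with
  | zero => intro μ a _ _; simp [B]
  | succ n ih =>
    intro μ a hμ h8
    push_cast at h8 ⊢
    have ha : 0 ≤ a := le_trans (abs_nonneg μ) hμ
    have hn0 : (0:ℝ) ≤ n := Nat.cast_nonneg n
    have han : a * n ≤ 1/8 - a := by nlinarith
    have han' : a * n ≤ 1/8 := by linarith [ha]
    have ha8 : a ≤ 1/8 := by nlinarith
    have hμ2 : μ ^ 2 ≤ a ^ 2 := by nlinarith [abs_nonneg μ, sq_abs μ]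
    have hg : |gf μ| ≤ a + 2 * a ^ 2 := by
      have := abs_le.1 hμ
      rw [gf, abs_le]
      constructor <;> nlinarith
    have h2an : 2*a*(a*n) ≤ 2*a*(1/8 - a) := by
      apply mul_le_mul_of_nonneg_left han (by linarith)
    have hg8 : (a + 2*a^2) * n ≤ 1/8 := by nlinarith
    have ihh := ih (gf μ) (a + 2*a^2) hg hg8
    have hB : B (n+1) μ = μ + B n (gf μ) := rfl
    rw [hB]
    have expand : (n:ℝ) * gf μ + 4*(a+2*a^2)^2*(n:ℝ)^2
        = n*μ + 2*n*μ^2 + 4*a^2*n^2 + 16*a^3*n^2 + 16*a^4*n^2 := by rw [gf]; ring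
    have k1 : 2*(a^2*n) * (a*n) ≤ 2*(a^2*n) * (1/8) := by
      apply mul_le_mul_of_nonneg_left han' (by positivity)
    have k2 : (a*n)*(a*n) ≤ (1/8)*(1/8) := by
      apply mul_le_mul han' han' (by positivity) (by norm_num)
    have k3 : a^2*((a*n)*(a*n)) ≤ a^2*((1/8)*(1/8)) := by
      apply mul_le_mul_of_nonneg_left k2 (by positivity)
    have k4 : (n:ℝ)*(μ^2) ≤ (n:ℝ)*(a^2) := by
      apply mul_le_mul_of_nonneg_left hμ2 hn0
    nlinarith [ihh, expand, k1, k3, k4, ha, hn0, sq_nonneg a]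

/-- Key MGF bound by induction on the number of signs. -/
lemma key_mgf : ∀ (n : ℕ) (z : Fin n → ℂ), (∀ j, ‖z j‖ = 1) → ∀ μ : ℝ,
    ∑ σ : Fin n → Bool, Real.exp (μ * ‖∑ j, (sg (σ j) : ℂ) * z j‖ ^ 2)
      ≤ 2 ^ n * Real.exp (B n μ) := by
  intro n
  induction n with
  | zero =>
    intro z hz μ
    simp [B]
  | succ n ih =>
    intro z hz μ
    have hexp2 : ∀ x y : ℝ, Real.exp (x + y) + Real.exp (x - y)
        = Real.exp x * (2 * Real.cosh y) := by
      intro x y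
      rw [Real.cosh_eq]
      have h : Real.exp x * (2 * ((Real.exp y + Real.exp (-y))/2))
          = Real.exp x * Real.exp y + Real.exp x * Real.exp (-y) := by ring
      rw [h, ← Real.exp_add, ← Real.exp_add, sub_eq_add_neg]
    have hre : ∑ σ : Fin (n+1) → Bool,
        Real.exp (μ * ‖∑ j, (sg (σ j) : ℂ) * z j‖ ^ 2)
        = ∑ τ : Fin n → Bool, ∑ b : Bool,
          Real.exp (μ * ‖∑ j, (sg (Fin.cons (α := fun _ => Bool) b τ j) : ℂ) * z j‖ ^ 2) := by
      rw [← (Fin.consEquiv (fun _ : Fin (n+1) => Bool)).sum_comp, Fintype.sum_prod_type,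
        Finset.sum_comm]
      rfl
    rw [hre]
    have step : ∀ τ : Fin n → Bool,
        ∑ b : Bool, Real.exp (μ * ‖∑ j, (sg (Fin.cons (α := fun _ => Bool) b τ j) : ℂ) * z j‖ ^ 2)
        ≤ 2 * Real.exp μ *
          Real.exp (gf μ * ‖∑ j : Fin n, (sg (τ j) : ℂ) * z j.succ‖ ^ 2) := by
      intro τ
      set S : ℂ := ∑ j : Fin n, (sg (τ j) : ℂ) * z j.succ with hS
      have hsplit : ∀ b : Bool,
          (∑ j, (sg (Fin.cons (α := fun _ => Bool) b τ j) : ℂ) * z j)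
            = (sg b : ℂ) * z 0 + S := by
        intro b
        rw [Fin.sum_univ_succ]
        simp [S]
      set c : ℝ := 2 * (z 0 * (starRingEnd ℂ) S).re with hc
      set A : ℝ := ‖S‖ ^ 2 with hA
      have habs : ∀ b : Bool,
          ‖(sg b : ℂ) * z 0 + S‖ ^ 2 = 1 + A + sg b * c := by
        intro b
        rw [Complex.sq_norm, Complex.normSq_add, hA, Complex.sq_norm]
        have h1 : Complex.normSq ((sg b : ℂ) * z 0) = 1 := by
          rw [Complex.normSq_mul, Complex.normSq_ofReal, ← Complex.sq_norm, hz 0]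
          have := sg_sq b
          nlinarith
        have h2 : ((sg b : ℂ) * z 0 * (starRingEnd ℂ) S).re
            = sg b * (z 0 * (starRingEnd ℂ) S).re := by
          rw [mul_assoc, Complex.re_ofReal_mul]
        rw [h1, h2, hc]
        ring
      have hcsq : c ^ 2 ≤ 4 * A := by
        have h1 : |(z 0 * (starRingEnd ℂ) S).re| ≤ ‖z 0 * (starRingEnd ℂ) S‖ :=
          Complex.abs_re_le_norm _
        have h2 : ‖z 0 * (starRingEnd ℂ) S‖ = ‖S‖ := by
          rw [norm_mul, hz 0, one_mul, Complex.norm_conj]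
        rw [h2] at h1
        have h3 := abs_nonneg ((z 0 * (starRingEnd ℂ) S).re)
        rw [hc, hA]
        nlinarith [sq_abs ((z 0 * (starRingEnd ℂ) S).re)]
      have hA0 : 0 ≤ A := by rw [hA]; positivity
      have hsum : ∑ b : Bool, Real.exp (μ * ‖∑ j, (sg (Fin.cons (α := fun _ => Bool) b τ j) : ℂ) * z j‖ ^ 2)
          = Real.exp (μ * (1 + A)) * (2 * Real.cosh (μ * c)) := by
        rw [Fintype.sum_bool, hsplit true, hsplit false, habs true, habs false]
        have e1 : sg true = 1 := rfl
        have e2 : sg false = -1 := rfl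
        rw [e1, e2]
        rw [show μ * (1 + A + 1 * c) = μ * (1 + A) + μ * c by ring,
          show μ * (1 + A + -1 * c) = μ * (1 + A) - μ * c by ring]
        exact hexp2 _ _
      rw [hsum]
      have hcosh : Real.cosh (μ * c) ≤ Real.exp (2 * μ^2 * A) := by
        calc Real.cosh (μ * c) ≤ Real.exp ((μ*c)^2 / 2) := Real.cosh_le_exp_half_sq _
        _ ≤ Real.exp (2 * μ^2 * A) := by
            apply Real.exp_le_exp.2
            nlinarith [sq_nonneg μ, hcsq]
      calc Real.exp (μ * (1 + A)) * (2 * Real.cosh (μ * c))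
          ≤ Real.exp (μ * (1 + A)) * (2 * Real.exp (2 * μ^2 * A)) := by
            apply mul_le_mul_of_nonneg_left _ (Real.exp_pos _).le
            linarith [hcosh]
      _ = 2 * Real.exp μ * Real.exp (gf μ * A) := by
            have h9 : Real.exp (μ * (1+A)) * (2 * Real.exp (2*μ^2*A))
                = 2 * Real.exp (μ*(1+A) + 2*μ^2*A) := by rw [Real.exp_add]; ring
            have h10 : (2:ℝ) * Real.exp μ * Real.exp (gf μ * A)
                = 2 * Real.exp (μ + gf μ * A) := by rw [Real.exp_add]; ring
            have h11 : μ*(1+A) + 2*μ^2*A = μ + gf μ * A := by rw [gf]; ring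
            rw [h9, h11, h10]
    calc ∑ τ : Fin n → Bool, ∑ b : Bool,
          Real.exp (μ * ‖∑ j, (sg (Fin.cons (α := fun _ => Bool) b τ j) : ℂ) * z j‖ ^ 2)
        ≤ ∑ τ : Fin n → Bool, 2 * Real.exp μ *
          Real.exp (gf μ * ‖∑ j : Fin n, (sg (τ j) : ℂ) * z j.succ‖ ^ 2) :=
          Finset.sum_le_sum (fun τ _ => step τ)
      _ = 2 * Real.exp μ * ∑ τ : Fin n → Bool,
          Real.exp (gf μ * ‖∑ j : Fin n, (sg (τ j) : ℂ) * z j.succ‖ ^ 2) := by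
          rw [Finset.mul_sum]
      _ ≤ 2 * Real.exp μ * (2 ^ n * Real.exp (B n (gf μ))) := by
          apply mul_le_mul_of_nonneg_left _ (by positivity)
          exact ih (fun j => z j.succ) (fun j => hz j.succ) (gf μ)
      _ = 2 ^ (n+1) * Real.exp (B (n+1) μ) := by
          have hB : B (n+1) μ = μ + B n (gf μ) := rfl
          rw [hB, Real.exp_add, pow_succ]
          ring

/-- centered per-block MGF bound -/
lemma block_mgf (n : ℕ) (z : Fin n → ℂ) (hz : ∀ j, ‖z j‖ = 1) (l : ℝ)
    (hl : |l| * n ≤ 1/8) :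
    ∑ σ : Fin n → Bool, Real.exp (l * (‖∑ j, (sg (σ j) : ℂ) * z j‖ ^ 2 - n))
      ≤ 2 ^ n * Real.exp (4 * l ^ 2 * n ^ 2) := by
  have h1 : ∀ σ : Fin n → Bool,
      Real.exp (l * (‖∑ j, (sg (σ j) : ℂ) * z j‖ ^ 2 - n))
      = Real.exp (- (l * n)) * Real.exp (l * ‖∑ j, (sg (σ j) : ℂ) * z j‖ ^ 2) := by
    intro σ; rw [← Real.exp_add]; ring_nf
  simp only [h1]
  rw [← Finset.mul_sum]
  have h2 := key_mgf n z hz l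
  have h3 : B n l ≤ n * l + 4 * l^2 * n^2 := by
    have := B_bound n l |l| le_rfl hl
    nlinarith [sq_abs l]
  calc Real.exp (-(l*n)) * ∑ σ : Fin n → Bool,
        Real.exp (l * ‖∑ j, (sg (σ j) : ℂ) * z j‖ ^ 2)
      ≤ Real.exp (-(l*n)) * (2 ^ n * Real.exp (B n l)) := by
        apply mul_le_mul_of_nonneg_left h2 (Real.exp_pos _).le
    _ ≤ 2 ^ n * Real.exp (4 * l ^ 2 * n ^ 2) := by
        rw [← mul_assoc, mul_comm (Real.exp (-(l*n))) ((2:ℝ)^n), mul_assoc, ← Real.exp_add]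
        apply mul_le_mul_of_nonneg_left _ (by positivity)
        apply Real.exp_le_exp.2
        linarith


section Blocks

variable {W R q : ℕ}

/-- The block equivalence `Fin R × Fin q ≃ Fin W` when `R * q = W`. -/
def blockEquiv (hq : R * q = W) (hq0 : 0 < q) : Fin R × Fin q ≃ Fin W where
  toFun p := ⟨p.1.val * q + p.2.val, by
    have h1 : (p.1.val + 1) * q ≤ R * q := Nat.mul_le_mul p.1.isLt le_rfl
    rw [hq] at h1
    have h2 := p.2.isLt
    nlinarith [h1, h2]⟩
  invFun j := (⟨j.val / q, by
      rw [Nat.div_lt_iff_lt_mul hq0]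
      calc j.val < W := j.isLt
      _ = R * q := hq.symm⟩,
    ⟨j.val % q, Nat.mod_lt _ hq0⟩)
  left_inv p := by
    ext
    · show (p.1.val * q + p.2.val) / q = p.1.val
      rw [mul_comm, Nat.mul_add_div hq0, Nat.div_eq_of_lt p.2.isLt, Nat.add_zero]
    · show (p.1.val * q + p.2.val) % q = p.2.val
      rw [mul_comm, Nat.mul_add_mod, Nat.mod_eq_of_lt p.2.isLt]
  right_inv j := by
    ext
    show j.val / q * q + j.val % q = j.val
    rw [mul_comm]
    exact Nat.div_add_mod _ _

lemma blockEquiv_val (hq : R * q = W) (hq0 : 0 < q) (r : Fin R) (i : Fin q) :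
    ((blockEquiv hq hq0 (r, i)) : Fin W).val = r.val * q + i.val := rfl

/-- `sampMatrix` evaluated at a block element. -/
lemma samp_eq (hq : R * q = W) (hq0 : 0 < q) (hRq : W / R = q) (r r' : Fin R) (i : Fin q) :
    sampMatrix W R r (blockEquiv hq hq0 (r', i)) = if r' = r then 1 else 0 := by
  rw [sampMatrix, hRq, blockEquiv_val]
  split_ifs with h1 h2 h2
  · rfl
  · exfalso
    apply h2
    obtain ⟨ha, hb⟩ := h1
    have hs : (r.val + 1) * q = r.val * q + q := Nat.succ_mul _ _
    have hi := i.isLt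
    -- r'.val * q + i.val ∈ [r*q, r*q+q) forces r' = r
    have hrr : r'.val = r.val := by
      rcases Nat.lt_trichotomy r'.val r.val with hlt | heq | hgt
      · exfalso
        have : (r'.val + 1) * q ≤ r.val * q := Nat.mul_le_mul hlt le_rfl
        have hs' : (r'.val + 1) * q = r'.val * q + q := Nat.succ_mul _ _
        nlinarith
      · exact heq
      · exfalso
        have : (r.val + 1) * q ≤ r'.val * q := Nat.mul_le_mul hgt le_rfl
        nlinarith
    exact Fin.ext hrr
  · exfalso
    apply h1
    subst h2
    constructor
    · exact Nat.le_add_right _ _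
    · have hs : (r'.val + 1) * q = r'.val * q + q := Nat.succ_mul _ _
      have hi := i.isLt
      nlinarith
  · rfl

/-- The entries of the demodulator matrix as a sum over one block. -/
lemma demod_entry (hq : R * q = W) (hq0 : 0 < q) (hRq : W / R = q)
    (v : Fin W → ℝ) (r : Fin R) (w : Fin W) :
    demodMatrix W R v r w
      = ∑ i : Fin q, (v (blockEquiv hq hq0 (r, i)) : ℂ)
          * dftMatrix W (blockEquiv hq hq0 (r, i)) w := by
  have h1 : demodMatrix W R v r w
      = ∑ k, sampMatrix W R r k * ((v k : ℂ) * dftMatrix W k w) := by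
    rw [demodMatrix, Matrix.mul_apply]
    simp only [Matrix.mul_diagonal]
    simp only [mul_assoc]
  rw [h1, ← (blockEquiv hq hq0).sum_comp
    (fun k => sampMatrix W R r k * ((v k : ℂ) * dftMatrix W k w)),
    Fintype.sum_prod_type]
  have h2 : ∀ r' : Fin R, ∑ i : Fin q,
      sampMatrix W R r (blockEquiv hq hq0 (r', i))
        * ((v (blockEquiv hq hq0 (r', i)) : ℂ) * dftMatrix W (blockEquiv hq hq0 (r', i)) w)
      = if r' = r then ∑ i : Fin q, (v (blockEquiv hq hq0 (r', i)) : ℂ)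
          * dftMatrix W (blockEquiv hq hq0 (r', i)) w else 0 := by
    intro r'
    simp only [samp_eq hq hq0 hRq r r', ite_mul, one_mul, zero_mul]
    split_ifs with h
    · rfl
    · simp
  simp only [h2]
  simp

/-- factorization of a sum over sign patterns of a product over blocks -/
lemma sum_prod_blocks (e : Fin R × Fin q ≃ Fin W) (f : Fin R → (Fin q → Bool) → ℝ) :
    ∑ σ : Fin W → Bool, ∏ r, f r (fun i => σ (e (r, i))) = ∏ r, ∑ τ : Fin q → Bool, f r τ := by
  rw [Fintype.prod_sum]
  apply Fintype.sum_bijective (fun σ : Fin W → Bool => (fun r i => σ (e (r, i))))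
  · constructor
    · intro σ σ' h
      funext j
      have h2 := congrFun (congrFun h (e.symm j).1) (e.symm j).2
      simpa using h2
    · intro g
      refine ⟨fun j => g (e.symm j).1 (e.symm j).2, ?_⟩
      funext r i
      simp
  · intro σ
    rfl

end Blocks


attribute [local instance] Classical.propDecidable

/-- the unit-modulus phase factors -/
def uvec (W : ℕ) (w : Fin W) (k : Fin W) : ℂ :=
  Complex.exp (-2 * Real.pi * Complex.I * (k.val : ℂ) * (w.val : ℂ) / (W : ℂ))

lemma dft_eq_uvec (W : ℕ) (k w : Fin W) :
    dftMatrix W k w = (Real.sqrt W : ℂ)⁻¹ * uvec W w k := rfl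

lemma abs_uvec (W : ℕ) (w k : Fin W) : ‖uvec W w k‖ = 1 := by
  rw [uvec]
  have h : (-2 * (Real.pi : ℂ) * Complex.I * (k.val : ℂ) * (w.val : ℂ) / (W : ℂ))
      = Complex.I * ((-2 * Real.pi * (k.val : ℝ) * (w.val : ℝ) / (W : ℝ) : ℝ) : ℂ) := by
    push_cast
    ring
  rw [h, Complex.norm_exp]
  simp [Complex.mul_re]

section Main

variable {W R q : ℕ}

/-- the block sums `T_r` -/
def Tb (hq : R * q = W) (hq0 : 0 < q) (w : Fin W) (σ : Fin W → Bool) (r : Fin R) : ℂ :=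
  ∑ i : Fin q, (sg (σ (blockEquiv hq hq0 (r, i))) : ℂ) * uvec W w (blockEquiv hq hq0 (r, i))

/-- column norm in terms of block sums -/
lemma colsum_eq (hq : R * q = W) (hq0 : 0 < q) (hRq : W / R = q) (hW : 0 < W)
    (σ : Fin W → Bool) (w : Fin W) :
    ∑ r : Fin R, ‖demodMatrix W R (fun j => sg (σ j)) r w‖ ^ 2
      = (W : ℝ)⁻¹ * ∑ r : Fin R, ‖Tb hq hq0 w σ r‖ ^ 2 := by
  rw [Finset.mul_sum]
  apply Finset.sum_congr rfl
  intro r _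
  rw [demod_entry hq hq0 hRq]
  have h1 : ∑ i : Fin q, ((fun j => sg (σ j)) (blockEquiv hq hq0 (r, i)) : ℂ)
      * dftMatrix W (blockEquiv hq hq0 (r, i)) w
      = (Real.sqrt W : ℂ)⁻¹ * Tb hq hq0 w σ r := by
    rw [Tb, Finset.mul_sum]
    apply Finset.sum_congr rfl
    intro i _
    rw [dft_eq_uvec]
    ring
  rw [h1, norm_mul]
  have h2 : ‖(Real.sqrt W : ℂ)⁻¹‖ = (Real.sqrt W)⁻¹ := by
    rw [norm_inv, Complex.norm_real, Real.norm_eq_abs, abs_of_nonneg (Real.sqrt_nonneg _)]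
  rw [h2, mul_pow]
  have h3 : ((Real.sqrt W)⁻¹) ^ 2 = (W : ℝ)⁻¹ := by
    rw [← Real.sqrt_inv, Real.sq_sqrt (by positivity)]
  rw [h3]

/-- total MGF bound over all sign patterns -/
lemma mgf_total (hq : R * q = W) (hq0 : 0 < q) (w : Fin W) (l : ℝ)
    (hl : |l| * q ≤ 1/8) :
    ∑ σ : Fin W → Bool,
      Real.exp (l * ∑ r : Fin R, (‖Tb hq hq0 w σ r‖ ^ 2 - q))
      ≤ 2 ^ W * Real.exp (4 * l ^ 2 * q ^ 2 * R) := by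
  have h1 : ∀ σ : Fin W → Bool,
      Real.exp (l * ∑ r : Fin R, (‖Tb hq hq0 w σ r‖ ^ 2 - q))
      = ∏ r : Fin R, Real.exp (l * (‖Tb hq hq0 w σ r‖ ^ 2 - q)) := by
    intro σ
    rw [Finset.mul_sum, Real.exp_sum]
  simp only [h1]
  have h2 : ∀ σ : Fin W → Bool, ∀ r : Fin R,
      Real.exp (l * (‖Tb hq hq0 w σ r‖ ^ 2 - q))
      = (fun (r : Fin R) (τ : Fin q → Bool) => Real.exp (l * (‖∑ i : Fin q, (sg (τ i) : ℂ) * uvec W w (blockEquiv hq hq0 (r, i))‖ ^ 2 - q))) r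
          (fun i => σ (blockEquiv hq hq0 (r, i))) := by
    intro σ r
    rfl
  calc ∑ σ : Fin W → Bool, ∏ r : Fin R,
        Real.exp (l * (‖Tb hq hq0 w σ r‖ ^ 2 - q))
      = ∏ r : Fin R, ∑ τ : Fin q → Bool, Real.exp (l * (‖∑ i : Fin q, (sg (τ i) : ℂ) * uvec W w (blockEquiv hq hq0 (r, i))‖ ^ 2 - q)) := by
        rw [← sum_prod_blocks (blockEquiv hq hq0)]
        rfl
    _ ≤ ∏ r : Fin R, (2 ^ q * Real.exp (4 * l ^ 2 * q ^ 2)) := by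
        apply Finset.prod_le_prod
        · intro r _
          apply Finset.sum_nonneg
          intro τ _
          exact (Real.exp_pos _).le
        · intro r _
          exact block_mgf q (fun i => uvec W w (blockEquiv hq hq0 (r, i)))
            (fun i => abs_uvec W w _) l hl
    _ = 2 ^ W * Real.exp (4 * l ^ 2 * q ^ 2 * R) := by
        rw [Finset.prod_const, Finset.card_univ, Fintype.card_fin, mul_pow, ← pow_mul,
          ← Real.exp_nat_mul]
        rw [mul_comm q R, hq]
        ring_nf

/-- Markov inequality on a finite type -/
lemma finset_markov {α : Type} [Fintype α] (h : α → ℝ) (t : ℝ) :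
    ((Finset.univ.filter (fun a => t ≤ h a)).card : ℝ) * Real.exp t ≤ ∑ a, Real.exp (h a) := by
  calc ((Finset.univ.filter (fun a => t ≤ h a)).card : ℝ) * Real.exp t
      = ∑ _a ∈ Finset.univ.filter (fun a => t ≤ h a), Real.exp t := by
        rw [Finset.sum_const, nsmul_eq_mul]
    _ ≤ ∑ a ∈ Finset.univ.filter (fun a => t ≤ h a), Real.exp (h a) := by
        apply Finset.sum_le_sum
        intro a ha
        exact Real.exp_le_exp.2 (Finset.mem_filter.1 ha).2
    _ ≤ ∑ a, Real.exp (h a) := by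
        apply Finset.sum_le_sum_of_subset_of_nonneg (Finset.filter_subset _ _)
        intro a _ _
        exact (Real.exp_pos _).le

/-- The main counting bound. -/
lemma count_main (W R q : ℕ) (hq : R * q = W) (hRq : W / R = q) (hq0 : 0 < q) (hR0 : 0 < R)
    (hW : 2 ≤ W) (δ : ℝ) (hδ0 : 0 < δ) (hδ1 : δ ≤ 1)
    (hlog : 64 / δ ^ 2 * Real.log W ≤ R) :
    ((Finset.univ.filter (fun σ : Fin W → Bool => ∃ w : Fin W,
        δ ≤ |(∑ r : Fin R, ‖demodMatrix W R (fun j => sg (σ j)) r w‖ ^ 2) - 1|)).card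
          : ℝ) * W ≤ 2 ^ W := by
  have hW0 : 0 < W := by omega
  have hWR : (W : ℝ) = (R : ℝ) * q := by exact_mod_cast hq.symm
  have hq0' : (0:ℝ) < q := by exact_mod_cast hq0
  have hR0' : (0:ℝ) < R := by exact_mod_cast hR0
  have hW0' : (0:ℝ) < W := by exact_mod_cast hW0
  set l : ℝ := δ / (16 * q) with hl
  have hl0 : 0 < l := by positivity
  have hlq : |l| * q ≤ 1/8 := by
    rw [abs_of_pos hl0, hl]
    rw [div_mul_eq_mul_div, div_le_iff₀ (by positivity)]
    nlinarith
  -- Z function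
  set Z : Fin W → (Fin W → Bool) → ℝ :=
    fun w σ => ∑ r : Fin R, (‖Tb hq hq0 w σ r‖ ^ 2 - q) with hZ
  -- the relation X - 1 = Z / W
  have hXZ : ∀ (σ : Fin W → Bool) (w : Fin W),
      (∑ r : Fin R, ‖demodMatrix W R (fun j => sg (σ j)) r w‖ ^ 2) - 1
        = (W : ℝ)⁻¹ * Z w σ := by
    intro σ w
    show _ = (W : ℝ)⁻¹ * ∑ r : Fin R, (‖Tb hq hq0 w σ r‖ ^ 2 - (q:ℝ))
    rw [colsum_eq hq hq0 hRq hW0]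
    rw [Finset.sum_sub_distrib, Finset.sum_const, Finset.card_univ, Fintype.card_fin]
    rw [mul_sub]
    congr 1
    rw [nsmul_eq_mul]
    rw [hWR]
    field_simp
  -- the exponent bound
  have hR64 : 64 * Real.log W ≤ δ ^ 2 * R := by
    have h := mul_le_mul_of_nonneg_left hlog (le_of_lt (by positivity : (0:ℝ) < δ ^ 2))
    calc 64 * Real.log W = δ ^ 2 * (64 / δ ^ 2 * Real.log W) := by field_simp
    _ ≤ δ ^ 2 * R := h
  have hlogW : 0 ≤ Real.log W := Real.log_nonneg (by exact_mod_cast hW0)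
  have hexp : 4 * l ^ 2 * q ^ 2 * R - l * ((W:ℝ) * δ) ≤ -(3 * Real.log W) := by
    have h1 : l * q = δ / 16 := by
      rw [hl]; field_simp
    have h2 : 4 * l ^ 2 * q ^ 2 * R = δ ^ 2 * R / 64 := by
      have : l ^ 2 * q ^ 2 = (l * q) ^ 2 := by ring
      rw [mul_assoc 4 (l^2) (q^2), this, h1]
      ring
    have h3 : l * ((W:ℝ) * δ) = δ ^ 2 * R / 16 := by
      rw [hWR]
      have : l * ((R:ℝ) * q * δ) = (l * q) * R * δ := by ring
      rw [this, h1]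
      ring
    rw [h2, h3]
    nlinarith
  -- per (w, sign) counting
  have hcount : ∀ (w : Fin W) (s : ℝ), s = l ∨ s = -l →
      ((Finset.univ.filter (fun σ : Fin W → Bool => l * ((W:ℝ) * δ) ≤ s * Z w σ)).card : ℝ)
        ≤ 2 ^ W * Real.exp (-(3 * Real.log W)) := by
    intro w s hs
    have hsl : |s| * q ≤ 1/8 := by
      rcases hs with h | h
      · rw [h]; exact hlq
      · rw [h, abs_neg]; exact hlq
    have hm := finset_markov (fun σ => s * Z w σ) (l * ((W:ℝ) * δ))
    have hmg : ∑ σ : Fin W → Bool, Real.exp (s * Z w σ)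
        ≤ 2 ^ W * Real.exp (4 * s ^ 2 * q ^ 2 * R) := mgf_total hq hq0 w s hsl
    have hs2 : s ^ 2 = l ^ 2 := by rcases hs with h | h <;> rw [h] <;> ring
    rw [hs2] at hmg
    have h5 : ((Finset.univ.filter
        (fun σ : Fin W → Bool => l * ((W:ℝ) * δ) ≤ s * Z w σ)).card : ℝ)
          * Real.exp (l * ((W:ℝ) * δ)) ≤ 2 ^ W * Real.exp (4 * l ^ 2 * q ^ 2 * R) :=
      le_trans hm hmg
    have h6 : (0:ℝ) < Real.exp (l * ((W:ℝ) * δ)) := Real.exp_pos _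
    rw [← le_div_iff₀ h6] at h5
    calc ((Finset.univ.filter
        (fun σ : Fin W → Bool => l * ((W:ℝ) * δ) ≤ s * Z w σ)).card : ℝ)
        ≤ 2 ^ W * Real.exp (4 * l ^ 2 * q ^ 2 * R) / Real.exp (l * ((W:ℝ) * δ)) := h5
      _ = 2 ^ W * Real.exp (4 * l ^ 2 * q ^ 2 * R - l * ((W:ℝ) * δ)) := by
          rw [Real.exp_sub]; ring
      _ ≤ 2 ^ W * Real.exp (-(3 * Real.log W)) := by
          apply mul_le_mul_of_nonneg_left _ (by positivity)
          exact Real.exp_le_exp.2 hexp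
  -- inclusion in the union of tail events
  have hsub : (Finset.univ.filter (fun σ : Fin W → Bool => ∃ w : Fin W,
        δ ≤ |(∑ r : Fin R, ‖demodMatrix W R (fun j => sg (σ j)) r w‖ ^ 2) - 1|))
      ⊆ Finset.univ.biUnion (fun w : Fin W =>
          (Finset.univ.filter (fun σ : Fin W → Bool => l * ((W:ℝ) * δ) ≤ l * Z w σ))
          ∪ (Finset.univ.filter (fun σ : Fin W → Bool => l * ((W:ℝ) * δ) ≤ (-l) * Z w σ))) := by
    intro σ hσ
    rw [Finset.mem_filter] at hσ
    obtain ⟨-, w, hw⟩ := hσ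
    rw [Finset.mem_biUnion]
    refine ⟨w, Finset.mem_univ _, ?_⟩
    rw [hXZ σ w] at hw
    rw [Finset.mem_union, Finset.mem_filter, Finset.mem_filter]
    have habs : |(W:ℝ)⁻¹ * Z w σ| = (W:ℝ)⁻¹ * |Z w σ| := by
      rw [abs_mul, abs_of_pos (inv_pos.2 hW0')]
    rw [habs] at hw
    have h7 : (W:ℝ) * δ ≤ |Z w σ| := by
      calc (W:ℝ) * δ ≤ (W:ℝ) * ((W:ℝ)⁻¹ * |Z w σ|) :=
            mul_le_mul_of_nonneg_left hw hW0'.le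
        _ = |Z w σ| := by field_simp
    rcases le_abs.1 h7 with h8 | h8
    · exact Or.inl ⟨Finset.mem_univ _, mul_le_mul_of_nonneg_left h8 hl0.le⟩
    · refine Or.inr ⟨Finset.mem_univ _, ?_⟩
      calc l * ((W:ℝ) * δ) ≤ l * (-(Z w σ)) := mul_le_mul_of_nonneg_left h8 hl0.le
        _ = (-l) * Z w σ := by ring
  -- put everything together
  have hWc : (2:ℝ) ≤ W := by exact_mod_cast hW
  have hexp3 : Real.exp (-(3 * Real.log W)) = (((W:ℝ)^3)⁻¹) := by
    rw [Real.exp_neg]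
    congr 1
    rw [show (3:ℝ) * Real.log W = Real.log ((W:ℝ)^3) by
      rw [Real.log_pow]; push_cast; ring]
    exact Real.exp_log (by positivity)
  have hcardN : (Finset.univ.filter (fun σ : Fin W → Bool => ∃ w : Fin W,
        δ ≤ |(∑ r : Fin R, ‖demodMatrix W R (fun j => sg (σ j)) r w‖ ^ 2) - 1|)).card
      ≤ ∑ w : Fin W,
        ((Finset.univ.filter (fun σ : Fin W → Bool => l * ((W:ℝ) * δ) ≤ l * Z w σ))
          ∪ (Finset.univ.filter (fun σ : Fin W → Bool =>
              l * ((W:ℝ) * δ) ≤ (-l) * Z w σ))).card :=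
    le_trans (Finset.card_le_card hsub) (Finset.card_biUnion_le)
  have hcardR : ((Finset.univ.filter (fun σ : Fin W → Bool => ∃ w : Fin W,
        δ ≤ |(∑ r : Fin R, ‖demodMatrix W R (fun j => sg (σ j)) r w‖ ^ 2) - 1|)).card
          : ℝ)
      ≤ (W:ℝ) * (2 * (2 ^ W * (((W:ℝ)^3)⁻¹))) := by
    calc ((Finset.univ.filter (fun σ : Fin W → Bool => ∃ w : Fin W,
        δ ≤ |(∑ r : Fin R, ‖demodMatrix W R (fun j => sg (σ j)) r w‖ ^ 2) - 1|)).card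
          : ℝ)
        ≤ (∑ w : Fin W,
          ((Finset.univ.filter (fun σ : Fin W → Bool => l * ((W:ℝ) * δ) ≤ l * Z w σ))
            ∪ (Finset.univ.filter (fun σ : Fin W → Bool =>
                l * ((W:ℝ) * δ) ≤ (-l) * Z w σ))).card : ℝ) := by exact_mod_cast hcardN
      _ ≤ ∑ w : Fin W, (2 * (2 ^ W * (((W:ℝ)^3)⁻¹))) := by
          apply Finset.sum_le_sum
          intro w _
          have hu : (((Finset.univ.filter
                (fun σ : Fin W → Bool => l * ((W:ℝ) * δ) ≤ l * Z w σ))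
              ∪ (Finset.univ.filter (fun σ : Fin W → Bool =>
                  l * ((W:ℝ) * δ) ≤ (-l) * Z w σ))).card : ℝ)
              ≤ ((Finset.univ.filter
                  (fun σ : Fin W → Bool => l * ((W:ℝ) * δ) ≤ l * Z w σ)).card : ℝ)
                + ((Finset.univ.filter (fun σ : Fin W → Bool =>
                    l * ((W:ℝ) * δ) ≤ (-l) * Z w σ)).card : ℝ) := by
            exact_mod_cast Finset.card_union_le _ _
          have c1 := hcount w l (Or.inl rfl)
          have c2 := hcount w (-l) (Or.inr rfl)
          rw [hexp3] at c1 c2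
          linarith
      _ = (W:ℝ) * (2 * (2 ^ W * (((W:ℝ)^3)⁻¹))) := by
          rw [Finset.sum_const, Finset.card_univ, Fintype.card_fin, nsmul_eq_mul]
  calc ((Finset.univ.filter (fun σ : Fin W → Bool => ∃ w : Fin W,
        δ ≤ |(∑ r : Fin R, ‖demodMatrix W R (fun j => sg (σ j)) r w‖ ^ 2) - 1|)).card
          : ℝ) * W
      ≤ ((W:ℝ) * (2 * (2 ^ W * (((W:ℝ)^3)⁻¹)))) * W :=
        mul_le_mul_of_nonneg_right hcardR hW0'.le
    _ = 2 * 2 ^ W / W := by field_simp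
    _ ≤ 2 ^ W := by
        rw [div_le_iff₀ hW0']
        nlinarith [pow_pos (show (0:ℝ) < 2 by norm_num) W]

end Main



/-- entries of the demodulator matrix -/
lemma demod_apply' (W R : ℕ) (v : Fin W → ℝ) (r : Fin R) (w : Fin W) :
    demodMatrix W R v r w
      = ∑ k, sampMatrix W R r k * ((v k : ℂ) * dftMatrix W k w) := by
  rw [demodMatrix, Matrix.mul_apply]
  simp only [Matrix.mul_diagonal]
  simp only [mul_assoc]

/-- The Rademacher marginal measure on `ℝ`. -/
def ber : Measure ℝ := (1/2 : ℝ≥0∞) • Measure.dirac 1 + (1/2 : ℝ≥0∞) • Measure.dirac (-1)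

instance : IsProbabilityMeasure ber := by
  constructor
  rw [ber, Measure.add_apply, Measure.smul_apply, Measure.smul_apply]
  simp only [measure_univ, smul_eq_mul, mul_one]
  exact ENNReal.add_halves 1

lemma ber_apply {s : Set ℝ} (hs : MeasurableSet s) :
    ber s = (if (1:ℝ) ∈ s then (1/2 : ℝ≥0∞) else 0) + (if (-1:ℝ) ∈ s then (1/2:ℝ≥0∞) else 0) := by
  rw [ber, Measure.add_apply, Measure.smul_apply, Measure.smul_apply,
    Measure.dirac_apply' _ hs, Measure.dirac_apply' _ hs]
  simp [Set.indicator_apply, mul_ite]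

/-- All Rademacher marginals equal `ber`. -/
lemma marginal {Ωp : Type} [MeasurableSpace Ωp] (μ : Measure Ωp) [IsProbabilityMeasure μ]
    (f : Ωp → ℝ) (hf : Measurable f) (hval : ∀ x, f x = 1 ∨ f x = -1)
    (hhalf : μ {x | f x = 1} = 1/2) {s : Set ℝ} (hs : MeasurableSet s) :
    μ (f ⁻¹' s) = ber s := by
  have hA : MeasurableSet {x | f x = 1} := hf (measurableSet_singleton 1)
  have hcompl : {x | f x = 1}ᶜ = {x | f x = -1} := by
    ext x
    simp only [Set.mem_compl_iff, Set.mem_setOf_eq]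
    constructor
    · intro h
      rcases hval x with h1 | h1
      · exact absurd h1 h
      · exact h1
    · intro h h1
      rw [h1] at h
      norm_num at h
  have hneg : μ {x | f x = -1} = 1/2 := by
    rw [← hcompl, measure_compl hA (measure_ne_top μ _), measure_univ, hhalf]
    rw [ENNReal.sub_half (by norm_num)]
  rw [ber_apply hs]
  by_cases h1 : (1:ℝ) ∈ s <;> by_cases h2 : (-1:ℝ) ∈ s
  · have hpre : f ⁻¹' s = Set.univ := by
      ext x
      simp only [Set.mem_preimage, Set.mem_univ, iff_true]
      rcases hval x with h | h <;> rw [h] <;> assumption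
    rw [hpre, measure_univ, if_pos h1, if_pos h2, ENNReal.add_halves]
  · have hpre : f ⁻¹' s = {x | f x = 1} := by
      ext x
      simp only [Set.mem_preimage, Set.mem_setOf_eq]
      constructor
      · intro h
        rcases hval x with hh | hh
        · exact hh
        · rw [hh] at h; exact absurd h h2
      · intro h; rw [h]; exact h1
    rw [hpre, hhalf, if_pos h1, if_neg h2, add_zero]
  · have hpre : f ⁻¹' s = {x | f x = -1} := by
      ext x
      simp only [Set.mem_preimage, Set.mem_setOf_eq]
      constructor
      · intro h
        rcases hval x with hh | hh
        · rw [hh] at h; exact absurd h h1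
        · exact hh
      · intro h; rw [h]; exact h2
    rw [hpre, hneg, if_neg h1, if_pos h2, zero_add]
  · have hpre : f ⁻¹' s = ∅ := by
      ext x
      simp only [Set.mem_preimage, Set.mem_empty_iff_false, iff_false]
      intro h
      rcases hval x with hh | hh
      · rw [hh] at h; exact h1 h
      · rw [hh] at h; exact h2 h
    rw [hpre, measure_empty, if_neg h1, if_neg h2, add_zero]

/-- The law of a Rademacher family is the product of `ber`s. -/
lemma map_eq_pi {Ωp : Type} [MeasurableSpace Ωp] (μ : Measure Ωp) [IsProbabilityMeasure μ]
    {W : ℕ} (ε : Ωp → Fin W → ℝ) (h : IsRademacherFamily μ ε) :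
    Measure.map (fun x => ε x) μ = Measure.pi (fun _ : Fin W => ber) := by
  obtain ⟨hmeas, hval, hhalf, hind⟩ := h
  have hεm : Measurable (fun x => ε x) := measurable_pi_lambda _ hmeas
  symm
  apply Measure.pi_eq
  intro s hs
  rw [Measure.map_apply hεm (MeasurableSet.univ_pi hs)]
  have hpre : (fun x => ε x) ⁻¹' (Set.pi Set.univ s)
      = ⋂ j ∈ (Finset.univ : Finset (Fin W)), (fun x => ε x j) ⁻¹' (s j) := by
    ext x
    simp [Set.mem_pi]
  rw [hpre, hind.measure_inter_preimage_eq_mul Finset.univ (fun j _ => hs j)]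
  apply Finset.prod_congr rfl
  intro j _
  exact marginal μ _ (hmeas j) (fun x => hval x j) (hhalf j) (hs j)

attribute [local instance] Classical.propDecidable

/-- The product of `ber`s is the uniform discrete measure on sign patterns. -/
lemma pi_ber_eq (W : ℕ) :
    Measure.pi (fun _ : Fin W => ber)
      = ((2:ℝ≥0∞)^W)⁻¹ • ∑ σ : Fin W → Bool, Measure.dirac (fun j => sg (σ j)) := by
  apply Measure.pi_eq
  intro s hs
  rw [Measure.smul_apply, smul_eq_mul,
    Measure.finset_sum_apply Finset.univ _ (Set.pi Set.univ s)]
  have hpi : MeasurableSet (Set.pi Set.univ s) := MeasurableSet.univ_pi hs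
  have h1 : ∀ σ : Fin W → Bool,
      Measure.dirac (fun j => sg (σ j)) (Set.pi Set.univ s)
        = ∏ j, (if sg (σ j) ∈ s j then (1:ℝ≥0∞) else 0) := by
    intro σ
    rw [Measure.dirac_apply' _ hpi, Set.indicator_apply]
    by_cases h : (fun j => sg (σ j)) ∈ Set.pi Set.univ s
    · rw [if_pos h]
      have h2 : ∀ j, sg (σ j) ∈ s j := by
        intro j
        exact h j (Set.mem_univ j)
      symm
      apply Finset.prod_eq_one
      intro j _
      rw [if_pos (h2 j)]
    · rw [if_neg h]
      rw [Set.mem_pi] at h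
      push_neg at h
      obtain ⟨j, _, hj⟩ := h
      symm
      apply Finset.prod_eq_zero (Finset.mem_univ j)
      rw [if_neg hj]
  simp only [h1]
  rw [← Fintype.prod_sum (fun (j : Fin W) (b : Bool) => if sg b ∈ s j then (1:ℝ≥0∞) else 0)]
  have h3 : ∀ j : Fin W, ∑ b : Bool, (if sg b ∈ s j then (1:ℝ≥0∞) else 0)
      = (if (1:ℝ) ∈ s j then (1:ℝ≥0∞) else 0) + (if (-1:ℝ) ∈ s j then (1:ℝ≥0∞) else 0) := by
    intro j
    rw [Fintype.sum_bool]
    rfl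
  simp only [h3]
  have h4 : ∀ j : Fin W, ber (s j)
      = 2⁻¹ * ((if (1:ℝ) ∈ s j then (1:ℝ≥0∞) else 0) + (if (-1:ℝ) ∈ s j then (1:ℝ≥0∞) else 0)) := by
    intro j
    rw [ber_apply (hs j)]
    rw [mul_add]
    congr 1 <;> (split_ifs <;> simp [ENNReal.div_eq_inv_mul])
  simp only [h4]
  rw [Finset.prod_mul_distrib, Finset.prod_const, Finset.card_univ, Fintype.card_fin,
    ← ENNReal.inv_pow]


end CNAux
/-- (Column Norms) There is a universal constant `C > 0` such that, for every
`δ ∈ (0,1]`, if `W ≥ 2` and `R ≥ C·δ⁻²·log W` then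
`P(max_ω |‖φ_ω‖₂² − 1| ≥ δ) ≤ 1/W`. -/
theorem column_norms :
    ∃ C : ℝ, 0 < C ∧ ∀ (W R : ℕ), 0 < R → R ∣ W → 2 ≤ W →
      ∀ δ : ℝ, 0 < δ → δ ≤ 1 →
      C / δ ^ 2 * Real.log W ≤ (R : ℝ) →
      ∀ (Ωp : Type) [MeasurableSpace Ωp] (μ : Measure Ωp) [IsProbabilityMeasure μ]
        (ε : Ωp → Fin W → ℝ), IsRademacherFamily μ ε →
      μ {x | ∃ w : Fin W,
          δ ≤ |(∑ r, ‖demodMatrix W R (ε x) r w‖ ^ 2) - 1|}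
        ≤ (W : ℝ≥0∞)⁻¹ := by
  classical
  refine ⟨64, by norm_num, ?_⟩
  intro W R hR hdvd hW δ hδ0 hδ1 hRlog Ωp _ μ _ ε hRad
  obtain ⟨hmeas, hval, hhalf, hind⟩ := id hRad
  set q := W / R with hqdef
  have hq : R * q = W := Nat.mul_div_cancel' hdvd
  have hq0 : 0 < q := by
    rcases Nat.eq_zero_or_pos q with h | h
    · rw [h, Nat.mul_zero] at hq; omega
    · exact h
  have hεm : Measurable (fun x => ε x) := measurable_pi_lambda _ hmeas
  have hgm : ∀ w : Fin W, Measurable (fun v : Fin W → ℝ =>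
      (∑ r : Fin R, ‖demodMatrix W R v r w‖ ^ 2) - 1) := by
    intro w
    apply Measurable.sub _ measurable_const
    apply Finset.measurable_sum
    intro r _
    apply Measurable.pow_const
    apply continuous_norm.measurable.comp
    have hh : (fun v : Fin W → ℝ => demodMatrix W R v r w)
        = fun v => ∑ k, sampMatrix W R r k * ((v k : ℂ) * dftMatrix W k w) := by
      funext v; exact CNAux.demod_apply' W R v r w
    rw [hh]
    apply Finset.measurable_sum
    intro k _
    exact measurable_const.mul
      ((Complex.measurable_ofReal.comp (measurable_pi_apply k)).mul measurable_const)
  have hAm : MeasurableSet {v : Fin W → ℝ | ∃ w : Fin W,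
      δ ≤ |(∑ r : Fin R, ‖demodMatrix W R v r w‖ ^ 2) - 1|} := by
    have heq : {v : Fin W → ℝ | ∃ w : Fin W,
        δ ≤ |(∑ r : Fin R, ‖demodMatrix W R v r w‖ ^ 2) - 1|}
        = ⋃ w : Fin W,
          {v | δ ≤ |(∑ r : Fin R, ‖demodMatrix W R v r w‖ ^ 2) - 1|} := by
      ext v; simp
    rw [heq]
    apply MeasurableSet.iUnion
    intro w
    exact measurableSet_le measurable_const (hgm w).abs
  have hset : {x | ∃ w : Fin W,
      δ ≤ |(∑ r, ‖demodMatrix W R (ε x) r w‖ ^ 2) - 1|}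
      = (fun x => ε x) ⁻¹' {v : Fin W → ℝ | ∃ w : Fin W,
          δ ≤ |(∑ r : Fin R, ‖demodMatrix W R v r w‖ ^ 2) - 1|} := rfl
  rw [hset, ← Measure.map_apply hεm hAm, CNAux.map_eq_pi μ ε hRad, CNAux.pi_ber_eq]
  rw [Measure.smul_apply, smul_eq_mul, Measure.finset_sum_apply]
  simp only [Measure.dirac_apply' _ hAm, Set.indicator_apply, Set.mem_setOf_eq,
    Pi.one_apply]
  rw [Finset.sum_boole]
  have hfin : ∀ (N : ℕ), (N : ℝ) * W ≤ 2 ^ W →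
      ((2 : ℝ≥0∞) ^ W)⁻¹ * (N : ℝ≥0∞) ≤ (W : ℝ≥0∞)⁻¹ := by
    intro N hNR
    have hNat : N * W ≤ 2 ^ W := by
      have hcast : ((N * W : ℕ) : ℝ) ≤ ((2 ^ W : ℕ) : ℝ) := by
        push_cast
        exact hNR
      exact_mod_cast hcast
    have hWne : ((W : ℝ≥0∞)) ≠ 0 := by
      simp only [ne_eq, Nat.cast_eq_zero]
      omega
    have hWtop : ((W : ℝ≥0∞)) ≠ ⊤ := by simp
    have h2ne : ((2 : ℝ≥0∞) ^ W) ≠ 0 := pow_ne_zero _ (by norm_num)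
    have h2top : ((2 : ℝ≥0∞) ^ W) ≠ ⊤ := ENNReal.pow_ne_top (by norm_num)
    have hkey : (N : ℝ≥0∞) * W ≤ 2 ^ W := by
      have h5 : ((N * W : ℕ) : ℝ≥0∞) ≤ ((2 ^ W : ℕ) : ℝ≥0∞) := by exact_mod_cast hNat
      push_cast at h5
      exact h5
    have h1 : (N : ℝ≥0∞) ≤ 2 ^ W / W :=
      (ENNReal.le_div_iff_mul_le (Or.inl hWne) (Or.inl hWtop)).2 hkey
    calc ((2 : ℝ≥0∞) ^ W)⁻¹ * N ≤ ((2 : ℝ≥0∞) ^ W)⁻¹ * (2 ^ W / W) := mul_le_mul_right h1 _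
      _ = (W : ℝ≥0∞)⁻¹ := by
          rw [div_eq_mul_inv, ← mul_assoc, ENNReal.inv_mul_cancel h2ne h2top, one_mul]
  exact hfin _ (CNAux.count_main W R q hq hqdef.symm hq0 hR hW δ hδ0 hδ1 hRlog)
end
end
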